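/- arXiv:1709.08782 — 9 statements merged into one kernel-verified Lean document; each statement's English description precedes it below -/
import Mathlib

section
/- Let n ≥ 3 and let I be the ideal of ℤ[x,y,z] generated by x^n - 1, y^n - 1, and z² - (Σ_{i,j=0}^{n-1} x^i y^j)·z. Then the quotient ring ℤ[x,y,z]/I is a free ℤ-module of rank 2n² with basis given by the images of {x^i y^j, x^i y^j z : 0 ≤ i, j ≤ n-1}. -/
open MvPolynomial Finset


open MvPolynomial Finset

namespace Stmt7Aux
noncomputable section
open Polynomial AdjoinRoot

variable (n : ℕ)

abbrev p1 : ℤ[X] := Polynomial.X ^ n - 1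
abbrev A1 := AdjoinRoot (p1 n)
abbrev p2 : (A1 n)[X] := Polynomial.X ^ n - 1
abbrev A2 := AdjoinRoot (p2 n)

def α2 : A2 n := algebraMap (A1 n) (A2 n) (root (p1 n))
def β2 : A2 n := root (p2 n)
def Nel : A2 n := (∑ i ∈ range n, α2 n ^ i) * (∑ j ∈ range n, β2 n ^ j)

abbrev p3 : (A2 n)[X] := Polynomial.X ^ 2 - Polynomial.C (Nel n) * Polynomial.X
abbrev A3 := AdjoinRoot (p3 n)

def av : A3 n := algebraMap (A2 n) (A3 n) (α2 n)
def bv : A3 n := algebraMap (A2 n) (A3 n) (β2 n)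
def cv : A3 n := root (p3 n)

lemma monic_p1 (hn : 0 < n) : (p1 n).Monic := by
  have := Polynomial.monic_X_pow_sub_C (1 : ℤ) hn.ne'
  simpa using this

lemma monic_p2 (hn : 0 < n) : (p2 n).Monic := by
  have := Polynomial.monic_X_pow_sub_C (1 : A1 n) hn.ne'
  simpa using this

lemma monic_p3 : (p3 n).Monic := by
  apply Polynomial.monic_X_pow_sub
  calc (Polynomial.C (Nel n) * Polynomial.X).degree
      ≤ (Polynomial.C (Nel n)).degree + (Polynomial.X : (A2 n)[X]).degree :=
        Polynomial.degree_mul_le _ _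
    _ ≤ 0 + 1 := add_le_add Polynomial.degree_C_le Polynomial.degree_X_le
    _ < 2 := by norm_num

lemma natDegree_p1 : (p1 n).natDegree = n := by
  have : (p1 n) = Polynomial.X ^ n - Polynomial.C 1 := by simp
  rw [this, Polynomial.natDegree_X_pow_sub_C]

instance : Nontrivial (A1 n) := by
  refine AdjoinRoot.nontrivial (p1 n) ?_
  have : (p1 n) = Polynomial.X ^ n - Polynomial.C 1 := by simp
  rcases Nat.eq_zero_or_pos n with h | h
  · subst h; simp [p1]
  · rw [this, Polynomial.degree_X_pow_sub_C h]
    exact_mod_cast fun hh => h.ne' (by exact_mod_cast hh)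

lemma natDegree_p2 : (p2 n).natDegree = n := by
  have : (p2 n) = Polynomial.X ^ n - Polynomial.C (1 : A1 n) := by simp
  rw [this, Polynomial.natDegree_X_pow_sub_C]

theorem nontrivialA2 (hn : 0 < n) : Nontrivial (A2 n) := by
  have b := AdjoinRoot.powerBasisAux' (monic_p2 n hn)
  rw [natDegree_p2] at b
  have : Nonempty (Fin n) := ⟨⟨0, hn⟩⟩
  exact b.repr.toEquiv.nontrivial

lemma natDegree_p3 (hn : 0 < n) : (p3 n).natDegree = 2 := by
  have := nontrivialA2 n hn
  have hd : (Polynomial.C (Nel n) * Polynomial.X).degree < (Polynomial.X ^ 2 : (A2 n)[X]).degree := by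
    calc (Polynomial.C (Nel n) * Polynomial.X).degree
        ≤ (Polynomial.C (Nel n)).degree + (Polynomial.X : (A2 n)[X]).degree :=
          Polynomial.degree_mul_le _ _
      _ ≤ 0 + 1 := add_le_add Polynomial.degree_C_le Polynomial.degree_X_le
      _ < 2 := by norm_num
      _ = (Polynomial.X ^ 2 : (A2 n)[X]).degree := by
          rw [Polynomial.degree_X_pow]; norm_num
  have := Polynomial.degree_sub_eq_left_of_degree_lt hd
  rw [Polynomial.degree_X_pow] at this
  exact Polynomial.natDegree_eq_of_degree_eq_some this

lemma root1_pow : root (p1 n) ^ n = 1 := by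
  have h := mk_self (f := p1 n)
  have : (mk (p1 n)) (Polynomial.X ^ n - 1) = root (p1 n) ^ n - 1 := by
    rw [map_sub, map_pow, mk_X, map_one]
  rw [this] at h
  linear_combination h

lemma α2_pow : α2 n ^ n = 1 := by
  rw [α2, ← map_pow, root1_pow, map_one]

lemma β2_pow : β2 n ^ n = 1 := by
  have h := mk_self (f := p2 n)
  have : (mk (p2 n)) (Polynomial.X ^ n - 1) = root (p2 n) ^ n - 1 := by
    rw [map_sub, map_pow, mk_X, map_one]
  rw [this] at h
  have := sub_eq_zero.mp h
  simpa [β2] using this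

lemma cv_sq : cv n ^ 2 = algebraMap (A2 n) (A3 n) (Nel n) * cv n := by
  have h := mk_self (f := p3 n)
  have : (mk (p3 n)) (p3 n) = root (p3 n) ^ 2 - algebraMap (A2 n) (A3 n) (Nel n) * root (p3 n) := by
    rw [map_sub, map_pow, map_mul, mk_X, mk_C, AdjoinRoot.algebraMap_eq]
  rw [this] at h
  have := sub_eq_zero.mp h
  simpa [cv] using this

/-- absorption -/
lemma absorb {R : Type*} [CommRing R] {x : R} (hx : x ^ n = 1) (a : ℕ) :
    x ^ a * (∑ i ∈ range n, x ^ i) = ∑ i ∈ range n, x ^ i := by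
  induction a with
  | zero => simp
  | succ a ih =>
    have h := geom_sum_mul x n
    rw [hx, sub_self] at h
    linear_combination x ^ a * h + ih

-- continuation to append before `end`s
def pb1 (hn : 0 < n) : PowerBasis ℤ (A1 n) := AdjoinRoot.powerBasis' (monic_p1 n hn)
def pb2 (hn : 0 < n) : PowerBasis (A1 n) (A2 n) := AdjoinRoot.powerBasis' (monic_p2 n hn)
def pb3 : PowerBasis (A2 n) (A3 n) := AdjoinRoot.powerBasis' (monic_p3 n)

def idxEquiv (hn : 0 < n) :
    (Fin n × Fin n × Bool) ≃ (Fin ((pb1 n hn).dim) × (Fin ((pb2 n hn).dim) × Fin ((pb3 n).dim))) :=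
  Equiv.prodCongr (finCongr (by simp [pb1, natDegree_p1]))
    (Equiv.prodCongr (finCongr (by simp [pb2, natDegree_p2]))
      (finTwoEquiv.symm.trans (finCongr (by simp [pb3, natDegree_p3 n hn]))))

def BZ (hn : 0 < n) : Module.Basis (Fin n × Fin n × Bool) ℤ (A3 n) :=
  ((pb1 n hn).basis.smulTower ((pb2 n hn).basis.smulTower (pb3 n).basis)).reindex
    (idxEquiv n hn).symm

lemma BZ_apply (hn : 0 < n) (i j : Fin n) (t : Bool) :
    BZ n hn (i, j, t) = av n ^ (i : ℕ) * bv n ^ (j : ℕ) * cv n ^ (if t then 1 else 0) := by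
  rw [BZ, Module.Basis.reindex_apply, Equiv.symm_symm]
  rw [show idxEquiv n hn (i, j, t)
      = (finCongr (by simp [pb1, natDegree_p1]) i,
         (finCongr (by simp [pb2, natDegree_p2]) j,
          finCongr (by simp [pb3, natDegree_p3 n hn]) (finTwoEquiv.symm t))) from rfl]
  rw [Module.Basis.smulTower_apply, Module.Basis.smulTower_apply]
  rw [PowerBasis.basis_eq_pow, PowerBasis.basis_eq_pow, PowerBasis.basis_eq_pow]
  have hgen1 : (pb1 n hn).gen = root (p1 n) := rfl
  have hgen2 : (pb2 n hn).gen = root (p2 n) := rfl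
  have hgen3 : (pb3 n).gen = root (p3 n) := rfl
  rw [hgen1, hgen2, hgen3]
  rw [Algebra.smul_def, Algebra.smul_def]
  have ht : ((finCongr (by simp [pb3, natDegree_p3 n hn] : 2 = (pb3 n).dim)
      (finTwoEquiv.symm t)) : ℕ) = (if t then 1 else 0) := by
    cases t <;> rfl
  have hi : ((finCongr (by simp [pb1, natDegree_p1] : n = (pb1 n hn).dim) i) : ℕ) = (i : ℕ) := rfl
  have hj : ((finCongr (by simp [pb2, natDegree_p2] : n = (pb2 n hn).dim) j) : ℕ) = (j : ℕ) := rfl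
  rw [ht, hi, hj]
  have h1 : algebraMap (A1 n) (A3 n) (root (p1 n)) = av n := by
    rw [IsScalarTower.algebraMap_apply (A1 n) (A2 n) (A3 n)]
    rfl
  have h2 : algebraMap (A2 n) (A3 n) (root (p2 n)) = bv n := rfl
  rw [map_pow, map_pow, h1, h2]
  show av n ^ (i:ℕ) * (bv n ^ (j:ℕ) * cv n ^ _) = _
  ring

def φ : MvPolynomial (Fin 3) ℤ →ₐ[ℤ] A3 n := aeval ![av n, bv n, cv n]

lemma phi_mon (i j k : ℕ) :
    φ n (X 0 ^ i * X 1 ^ j * X 2 ^ k) = av n ^ i * bv n ^ j * cv n ^ k := by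
  simp [φ]

lemma av_pow : av n ^ n = 1 := by rw [av, ← map_pow, α2_pow, map_one]
lemma bv_pow : bv n ^ n = 1 := by rw [bv, ← map_pow, β2_pow, map_one]

lemma phi_gen1 : φ n (X 0 ^ n - 1) = 0 := by
  rw [map_sub, map_pow, map_one]
  have : φ n (X 0) = av n := by simp [φ]
  rw [this, av_pow, sub_self]

lemma phi_gen2 : φ n (X 1 ^ n - 1) = 0 := by
  rw [map_sub, map_pow, map_one]
  have : φ n (X 1) = bv n := by simp [φ]
  rw [this, bv_pow, sub_self]

lemma sum_eq_N :
    (∑ i ∈ range n, ∑ j ∈ range n, av n ^ i * bv n ^ j) = algebraMap (A2 n) (A3 n) (Nel n) := by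
  rw [Nel, map_mul, map_sum, map_sum]
  rw [← Finset.sum_mul_sum]
  simp [av, bv, map_pow]

lemma phi_gen3 :
    φ n (X 2 ^ 2 - (∑ i ∈ range n, ∑ j ∈ range n, X 0 ^ i * X 1 ^ j) * X 2) = 0 := by
  have h2 : φ n (X 2) = cv n := by simp [φ]
  rw [map_sub, map_pow, map_mul, map_sum, h2]
  have : (∑ i ∈ range n, φ n (∑ j ∈ range n, X 0 ^ i * X 1 ^ j))
      = ∑ i ∈ range n, ∑ j ∈ range n, av n ^ i * bv n ^ j := by
    refine Finset.sum_congr rfl fun i _ => ?_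
    rw [map_sum]
    refine Finset.sum_congr rfl fun j _ => ?_
    simpa using phi_mon n i j 0
  rw [this, sum_eq_N, cv_sq, sub_self]

end
end Stmt7Aux

set_option maxHeartbeats 1000000 in
/-- `ℤ[x,y,z]/(xⁿ-1, yⁿ-1, z² - (Σ xⁱyʲ)z)` (the projective class ring of `𝓗_n(q)`)
is a free `ℤ`-module of rank `2n²` with basis the images of
`{xⁱyʲ, xⁱyʲz : 0 ≤ i,j ≤ n-1}`. -/
theorem stmt_7 (n : ℕ) (hn : 3 ≤ n)
    (I : Ideal (MvPolynomial (Fin 3) ℤ))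
    (hI : I = Ideal.span
      { X 0 ^ n - 1, X 1 ^ n - 1,
        X 2 ^ 2 - (∑ i ∈ range n, ∑ j ∈ range n, X 0 ^ i * X 1 ^ j) * X 2 }) :
    ∃ B : Module.Basis (Fin n × Fin n × Bool) ℤ (MvPolynomial (Fin 3) ℤ ⧸ I),
      ∀ (i j : Fin n) (t : Bool),
        B (i, j, t) = Ideal.Quotient.mk I
          (X 0 ^ (i : ℕ) * X 1 ^ (j : ℕ) * X 2 ^ (if t then 1 else 0)) := by
  classical
  have hn0 : 0 < n := by omega
  set v : Fin n × Fin n × Bool → MvPolynomial (Fin 3) ℤ ⧸ I := fun p =>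
    Ideal.Quotient.mk I
      (X 0 ^ (p.1 : ℕ) * X 1 ^ (p.2.1 : ℕ) * X 2 ^ (if p.2.2 then 1 else 0)) with hvdef
  -- generators are in I
  have hg1 : (X 0 ^ n - 1 : MvPolynomial (Fin 3) ℤ) ∈ I := by
    rw [hI]; exact Ideal.subset_span (by left; rfl)
  have hg2 : (X 1 ^ n - 1 : MvPolynomial (Fin 3) ℤ) ∈ I := by
    rw [hI]; exact Ideal.subset_span (by right; left; rfl)
  have hg3 : (X 2 ^ 2 - (∑ i ∈ range n, ∑ j ∈ range n, X 0 ^ i * X 1 ^ j) * X 2 :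
      MvPolynomial (Fin 3) ℤ) ∈ I := by
    rw [hI]; exact Ideal.subset_span (by right; right; rfl)
  set u0 : MvPolynomial (Fin 3) ℤ ⧸ I := Ideal.Quotient.mk I (X 0) with hu0
  set u1 : MvPolynomial (Fin 3) ℤ ⧸ I := Ideal.Quotient.mk I (X 1) with hu1
  set u2 : MvPolynomial (Fin 3) ℤ ⧸ I := Ideal.Quotient.mk I (X 2) with hu2
  have r0 : u0 ^ n = 1 := by
    have h := Ideal.Quotient.eq_zero_iff_mem.mpr hg1
    rw [map_sub, map_pow, map_one] at h
    have := sub_eq_zero.mp h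
    rw [hu0]; exact this
  have r1 : u1 ^ n = 1 := by
    have h := Ideal.Quotient.eq_zero_iff_mem.mpr hg2
    rw [map_sub, map_pow, map_one] at h
    have := sub_eq_zero.mp h
    rw [hu1]; exact this
  have r2 : u2 ^ 2 = (∑ i ∈ range n, ∑ j ∈ range n, u0 ^ i * u1 ^ j) * u2 := by
    have h := Ideal.Quotient.eq_zero_iff_mem.mpr hg3
    simp only [map_sub, map_pow, map_mul, map_sum] at h
    exact sub_eq_zero.mp h
  have hv : ∀ (i j : Fin n) (t : Bool),
      v (i, j, t) = u0 ^ (i : ℕ) * u1 ^ (j : ℕ) * u2 ^ (if t then 1 else 0) := by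
    intro i j t
    simp only [hvdef, map_mul, map_pow, hu0, hu1, hu2]
  set S : Submodule ℤ (MvPolynomial (Fin 3) ℤ ⧸ I) := Submodule.span ℤ (Set.range v) with hS
  have hmem : ∀ (i j : Fin n) (t : Bool),
      u0 ^ (i : ℕ) * u1 ^ (j : ℕ) * u2 ^ (if t then 1 else 0) ∈ S :=
    fun i j t => (hv i j t) ▸ Submodule.subset_span ⟨(i, j, t), rfl⟩
  -- closure under multiplication by each variable
  have habs0 : ∀ a : ℕ, u0 ^ a * (∑ i ∈ range n, u0 ^ i) = ∑ i ∈ range n, u0 ^ i :=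
    Stmt7Aux.absorb n r0
  have habs1 : ∀ a : ℕ, u1 ^ a * (∑ i ∈ range n, u1 ^ i) = ∑ i ∈ range n, u1 ^ i :=
    Stmt7Aux.absorb n r1
  have hmulX : ∀ k : Fin 3, ∀ s ∈ S, s * Ideal.Quotient.mk I (X k) ∈ S := by
    intro k s hs
    induction hs using Submodule.span_induction with
    | zero => simp
    | add x y hx hy ihx ihy => rw [add_mul]; exact S.add_mem ihx ihy
    | smul a x hx ih => rw [smul_mul_assoc]; exact S.smul_mem a ih
    | mem x hx =>
      obtain ⟨⟨i, j, t⟩, rfl⟩ := hx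
      fin_cases k
      · -- X 0
        show v (i, j, t) * Ideal.Quotient.mk I (X 0) ∈ S
        have : v (i, j, t) * Ideal.Quotient.mk I (X 0)
            = u0 ^ ((((i : ℕ) + 1) % n)) * u1 ^ (j : ℕ) * u2 ^ (if t then 1 else 0) := by
          rw [hv, ← hu0, ← pow_eq_pow_mod _ r0]; ring
        rw [this]
        exact hmem ⟨((i : ℕ) + 1) % n, Nat.mod_lt _ hn0⟩ j t
      · -- X 1
        show v (i, j, t) * Ideal.Quotient.mk I (X 1) ∈ S
        have : v (i, j, t) * Ideal.Quotient.mk I (X 1)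
            = u0 ^ (i : ℕ) * u1 ^ ((((j : ℕ) + 1) % n)) * u2 ^ (if t then 1 else 0) := by
          rw [hv, ← hu1, ← pow_eq_pow_mod _ r1]; ring
        rw [this]
        exact hmem i ⟨((j : ℕ) + 1) % n, Nat.mod_lt _ hn0⟩ t
      · -- X 2
        show v (i, j, t) * Ideal.Quotient.mk I (X 2) ∈ S
        cases t
        · have : v (i, j, false) * Ideal.Quotient.mk I (X 2)
              = u0 ^ (i : ℕ) * u1 ^ (j : ℕ) * u2 ^ (if true then 1 else 0) := by
            rw [hv, ← hu2]
            simp only [Bool.false_eq_true, if_false, if_true, pow_zero, pow_one, mul_one]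
          rw [this]
          exact hmem i j true
        · have : v (i, j, true) * Ideal.Quotient.mk I (X 2)
              = ∑ a ∈ range n, ∑ b ∈ range n, u0 ^ a * u1 ^ b * u2 ^ (if true then 1 else 0) := by
            rw [hv, ← hu2]
            simp only [if_true, pow_one]
            have step1 : u0 ^ (i : ℕ) * u1 ^ (j : ℕ) * u2 * u2
                = u0 ^ (i : ℕ) * u1 ^ (j : ℕ) * u2 ^ 2 := by ring
            rw [step1, r2]
            have step2 : (∑ a ∈ range n, ∑ b ∈ range n, u0 ^ a * u1 ^ b)
                = (∑ a ∈ range n, u0 ^ a) * (∑ b ∈ range n, u1 ^ b) := by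
              rw [Finset.sum_mul_sum]
            rw [step2]
            have step3 : u0 ^ (i : ℕ) * u1 ^ (j : ℕ)
                  * ((∑ a ∈ range n, u0 ^ a) * (∑ b ∈ range n, u1 ^ b) * u2)
                = (u0 ^ (i : ℕ) * (∑ a ∈ range n, u0 ^ a))
                  * (u1 ^ (j : ℕ) * (∑ b ∈ range n, u1 ^ b)) * u2 := by ring
            rw [step3, habs0, habs1, Finset.sum_mul_sum, Finset.sum_mul]
            refine Finset.sum_congr rfl fun a _ => ?_
            rw [Finset.sum_mul]
          rw [this]
          exact Submodule.sum_mem _ fun a ha => Submodule.sum_mem _ fun b hb =>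
            hmem ⟨a, Finset.mem_range.mp ha⟩ ⟨b, Finset.mem_range.mp hb⟩ true
  -- spanning
  have hsp : ⊤ ≤ S := by
    intro q _
    obtain ⟨p, rfl⟩ := Ideal.Quotient.mk_surjective q
    induction p using MvPolynomial.induction_on with
    | C a =>
      have h1 : (Ideal.Quotient.mk I) (C a : MvPolynomial (Fin 3) ℤ) = a • (1 : _) := by
        rw [show (C a : MvPolynomial (Fin 3) ℤ) = a • 1 by
          rw [MvPolynomial.smul_eq_C_mul, mul_one]]
        exact map_zsmul (Ideal.Quotient.mk I) a 1
      have h2 : (1 : MvPolynomial (Fin 3) ℤ ⧸ I) = v (⟨0, hn0⟩, ⟨0, hn0⟩, false) := by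
        simp [hvdef]
      rw [h1, h2]
      exact S.smul_mem a (Submodule.subset_span ⟨_, rfl⟩)
    | add p q hp hq => rw [map_add]; exact S.add_mem (hp trivial) (hq trivial)
    | mul_X p k hp => rw [map_mul]; exact hmulX k _ (hp trivial)
  -- linear independence via the model `A3`
  have hker : ∀ a ∈ I, Stmt7Aux.φ n a = 0 := by
    intro a ha
    rw [hI] at ha
    have hle : Ideal.span ({ X 0 ^ n - 1, X 1 ^ n - 1,
        X 2 ^ 2 - (∑ i ∈ range n, ∑ j ∈ range n, X 0 ^ i * X 1 ^ j) * X 2 } :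
          Set (MvPolynomial (Fin 3) ℤ)) ≤ RingHom.ker (Stmt7Aux.φ n).toRingHom := by
      rw [Ideal.span_le]
      rintro x (rfl | rfl | rfl)
      · exact Stmt7Aux.phi_gen1 n
      · exact Stmt7Aux.phi_gen2 n
      · exact Stmt7Aux.phi_gen3 n
    exact hle ha
  set ψ : (MvPolynomial (Fin 3) ℤ ⧸ I) →ₐ[ℤ] Stmt7Aux.A3 n :=
    Ideal.Quotient.liftₐ I (Stmt7Aux.φ n) hker with hψ
  have hcomp : ⇑ψ.toLinearMap ∘ v = ⇑(Stmt7Aux.BZ n hn0) := by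
    funext p
    obtain ⟨i, j, t⟩ := p
    show ψ (v (i, j, t)) = Stmt7Aux.BZ n hn0 (i, j, t)
    rw [hvdef, hψ]
    show Ideal.Quotient.liftₐ I (Stmt7Aux.φ n) hker (Ideal.Quotient.mk I _) = _
    show ((Stmt7Aux.φ n : _ →ₐ[ℤ] _) : MvPolynomial (Fin 3) ℤ →+* Stmt7Aux.A3 n)
        (X 0 ^ (i : ℕ) * X 1 ^ (j : ℕ) * X 2 ^ (if t then 1 else 0)) = _
    rw [show ((Stmt7Aux.φ n : _ →ₐ[ℤ] _) : MvPolynomial (Fin 3) ℤ →+* Stmt7Aux.A3 n)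
        (X 0 ^ (i : ℕ) * X 1 ^ (j : ℕ) * X 2 ^ (if t then 1 else 0))
      = Stmt7Aux.φ n (X 0 ^ (i : ℕ) * X 1 ^ (j : ℕ) * X 2 ^ (if t then 1 else 0)) from rfl]
    rw [Stmt7Aux.phi_mon, Stmt7Aux.BZ_apply]
  have li : LinearIndependent ℤ v := by
    apply LinearIndependent.of_comp ψ.toLinearMap
    rw [show ⇑ψ.toLinearMap ∘ v = ⇑(Stmt7Aux.BZ n hn0) from hcomp]
    exact (Stmt7Aux.BZ n hn0).linearIndependent
  refine ⟨Module.Basis.mk li hsp, fun i j t => ?_⟩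
  rw [Module.Basis.mk_apply]
end

section
/- Let n ≥ 3 and let I be the ideal of ℤ[x,y,z] generated by x^n - 1, y^n - 1, and z² - n·(Σ_{i=0}^{n-1} x^i)·z. Then the quotient ring ℤ[x,y,z]/I is a free ℤ-module of rank 2n² with basis given by the images of {x^i y^j, x^i y^j z : 0 ≤ i, j ≤ n-1}. -/
open MvPolynomial Finset
open Fin.NatCast

/-- Normal form of the monomial `x^a y^b z^c` in the basis indexed by `Fin n × Fin n × Bool`. -/
noncomputable def s8F (n : ℕ) [NeZero n] (a b : ℕ) : ℕ → (Fin n × Fin n × Bool →₀ ℤ)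
  | 0 => Finsupp.single ((a : Fin n), (b : Fin n), false) 1
  | 1 => Finsupp.single ((a : Fin n), (b : Fin n), true) 1
  | (k+2) => (n:ℤ)^(2*k+1) • ∑ i : Fin n, Finsupp.single (i, (b : Fin n), true) 1

lemma s8F_zero (n : ℕ) [NeZero n] (a b : ℕ) :
    s8F n a b 0 = Finsupp.single ((a : Fin n), (b : Fin n), false) 1 := rfl
lemma s8F_one (n : ℕ) [NeZero n] (a b : ℕ) :
    s8F n a b 1 = Finsupp.single ((a : Fin n), (b : Fin n), true) 1 := rfl
lemma s8F_two (n : ℕ) [NeZero n] (a b k : ℕ) :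
    s8F n a b (k+2) = (n:ℤ)^(2*k+1) • ∑ i : Fin n, Finsupp.single (i, (b : Fin n), true) 1 := rfl

lemma s8F_addx (n : ℕ) [NeZero n] (a b c : ℕ) : s8F n (a + n) b c = s8F n a b c := by
  have h : ((a + n : ℕ) : Fin n) = (a : Fin n) := by push_cast [Fin.natCast_self]; simp
  match c with
  | 0 => rw [s8F_zero, s8F_zero, h]
  | 1 => rw [s8F_one, s8F_one, h]
  | (k+2) => rfl

lemma s8F_addy (n : ℕ) [NeZero n] (a b c : ℕ) : s8F n a (b + n) c = s8F n a b c := by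
  have h : ((b + n : ℕ) : Fin n) = (b : Fin n) := by push_cast [Fin.natCast_self]; simp
  match c with
  | 0 => rw [s8F_zero, s8F_zero, h]
  | 1 => rw [s8F_one, s8F_one, h]
  | (k+2) => rw [s8F_two, s8F_two, h]

lemma s8F_three (n : ℕ) [NeZero n] (a b c : ℕ) :
    s8F n a b (c + 2) = ∑ i ∈ range n, (n:ℤ) • s8F n (a + i) b (c + 1) := by
  match c with
  | 0 =>
    have h01 : ∀ x, s8F n x b (0+1) = s8F n x b 1 := fun _ => rfl
    simp only [h01, s8F_two, s8F_one]
    rw [← Fin.sum_univ_eq_sum_range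
      (fun i => (n:ℤ) • Finsupp.single (((a + i : ℕ) : Fin n), (b : Fin n), true) (1:ℤ)) n]
    have hcast : ∀ i : Fin n, ((a + (i:ℕ) : ℕ) : Fin n) = (a : Fin n) + i := by
      intro i; push_cast [Fin.cast_val_eq_self]; ring
    simp only [hcast]
    rw [show (2*0+1 : ℕ) = 1 by norm_num, pow_one, Finset.smul_sum]
    exact (Equiv.sum_comp (Equiv.addLeft (a : Fin n))
      (fun x => (n:ℤ) • Finsupp.single (x, (b : Fin n), true) (1:ℤ))).symm
  | (k+1) =>
    have h12 : ∀ x, s8F n x b (k+1+1) = s8F n x b (k+2) := fun _ => rfl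
    simp only [h12, s8F_two, Finset.sum_const, card_range, smul_smul]
    rw [← natCast_zsmul, smul_smul]
    congr 1
    ring

noncomputable def s8Psi (n : ℕ) [NeZero n] :
    MvPolynomial (Fin 3) ℤ →ₗ[ℤ] (Fin n × Fin n × Bool →₀ ℤ) :=
  (basisMonomials (Fin 3) ℤ).constr ℤ (fun m => s8F n (m 0) (m 1) (m 2))

lemma s8Psi_monomial (n : ℕ) [NeZero n] (u : Fin 3 →₀ ℕ) :
    s8Psi n (monomial u 1) = s8F n (u 0) (u 1) (u 2) := by
  have := (basisMonomials (Fin 3) ℤ).constr_basis ℤ (fun m => s8F n (m 0) (m 1) (m 2)) u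
  rwa [coe_basisMonomials] at this

lemma s8Psi_g1 (n : ℕ) [NeZero n] (u : Fin 3 →₀ ℕ) :
    s8Psi n (monomial u 1 * (X 0 ^ n - 1)) = 0 := by
  rw [mul_sub, mul_one, X_pow_eq_monomial, monomial_mul, mul_one, map_sub,
    s8Psi_monomial, s8Psi_monomial]
  have e0 : (u + Finsupp.single (0 : Fin 3) n) 0 = u 0 + n := by simp
  have e1 : (u + Finsupp.single (0 : Fin 3) n) 1 = u 1 := by
    simp [Finsupp.single_apply]
  have e2 : (u + Finsupp.single (0 : Fin 3) n) 2 = u 2 := by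
    simp [Finsupp.single_apply]
  rw [e0, e1, e2, s8F_addx, sub_self]

lemma s8Psi_g2 (n : ℕ) [NeZero n] (u : Fin 3 →₀ ℕ) :
    s8Psi n (monomial u 1 * (X 1 ^ n - 1)) = 0 := by
  rw [mul_sub, mul_one, X_pow_eq_monomial, monomial_mul, mul_one, map_sub,
    s8Psi_monomial, s8Psi_monomial]
  have e0 : (u + Finsupp.single (1 : Fin 3) n) 0 = u 0 := by
    simp [Finsupp.single_apply]
  have e1 : (u + Finsupp.single (1 : Fin 3) n) 1 = u 1 + n := by simp
  have e2 : (u + Finsupp.single (1 : Fin 3) n) 2 = u 2 := by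
    simp [Finsupp.single_apply]
  rw [e0, e1, e2, s8F_addy, sub_self]

lemma s8Psi_g3 (n : ℕ) [NeZero n] (u : Fin 3 →₀ ℕ) :
    s8Psi n (monomial u 1 *
      (X 2 ^ 2 - (n : MvPolynomial (Fin 3) ℤ) * (∑ i ∈ range n, X 0 ^ i) * X 2)) = 0 := by
  have expand : monomial u (1:ℤ) *
      (X 2 ^ 2 - (n : MvPolynomial (Fin 3) ℤ) * (∑ i ∈ range n, X 0 ^ i) * X 2)
      = monomial (u + Finsupp.single 2 2) 1
        - ∑ i ∈ range n, (n:ℤ) • monomial (u + (Finsupp.single 0 i + Finsupp.single 2 1)) 1 := by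
    rw [mul_sub]
    congr 1
    · rw [X_pow_eq_monomial, monomial_mul, mul_one]
    · rw [Finset.mul_sum, Finset.sum_mul, Finset.mul_sum]
      refine Finset.sum_congr rfl fun i _ => ?_
      have h : monomial (u + (Finsupp.single 0 i + Finsupp.single 2 1)) (1:ℤ)
          = monomial u 1 * (X 0 ^ i * X 2 ^ 1) := by
        rw [X_pow_eq_monomial, X_pow_eq_monomial, monomial_mul, monomial_mul, mul_one, mul_one]
      rw [h, zsmul_eq_mul]
      push_cast
      ring
  rw [expand, map_sub, map_sum, s8Psi_monomial]
  simp only [map_smul, s8Psi_monomial]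
  have d0 : ((u + Finsupp.single (2 : Fin 3) 2 : Fin 3 →₀ ℕ)) 0 = u 0 := by simp [Finsupp.single_apply]
  have d1 : ((u + Finsupp.single (2 : Fin 3) 2 : Fin 3 →₀ ℕ)) 1 = u 1 := by simp [Finsupp.single_apply]
  have d2 : ((u + Finsupp.single (2 : Fin 3) 2 : Fin 3 →₀ ℕ)) 2 = u 2 + 2 := by simp
  have c0 : ∀ i : ℕ, ((u + (Finsupp.single (0 : Fin 3) i + Finsupp.single 2 1) : Fin 3 →₀ ℕ)) 0 = u 0 + i := by
    intro i; simp [Finsupp.single_apply]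
  have c1 : ∀ i : ℕ, ((u + (Finsupp.single (0 : Fin 3) i + Finsupp.single 2 1) : Fin 3 →₀ ℕ)) 1 = u 1 := by
    intro i; simp [Finsupp.single_apply]
  have c2 : ∀ i : ℕ, ((u + (Finsupp.single (0 : Fin 3) i + Finsupp.single 2 1) : Fin 3 →₀ ℕ)) 2 = u 2 + 1 := by
    intro i; simp [Finsupp.single_apply]
  rw [d0, d1, d2]
  simp only [c0, c1, c2]
  rw [s8F_three n (u 0) (u 1) (u 2), sub_self]

lemma s8Psi_span (n : ℕ) [NeZero n] {p : MvPolynomial (Fin 3) ℤ}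
    (hp : p ∈ Ideal.span ({ X 0 ^ n - 1, X 1 ^ n - 1,
        X 2 ^ 2 - (n : MvPolynomial (Fin 3) ℤ) * (∑ i ∈ range n, X 0 ^ i) * X 2 } :
        Set (MvPolynomial (Fin 3) ℤ))) :
    s8Psi n p = 0 := by
  have main : ∀ g ∈ ({ X 0 ^ n - 1, X 1 ^ n - 1,
      X 2 ^ 2 - (n : MvPolynomial (Fin 3) ℤ) * (∑ i ∈ range n, X 0 ^ i) * X 2 } :
      Set (MvPolynomial (Fin 3) ℤ)), ∀ q, s8Psi n (q * g) = 0 := by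
    intro g hg
    have mono : ∀ u : Fin 3 →₀ ℕ, s8Psi n (monomial u 1 * g) = 0 := by
      rcases hg with rfl | rfl | rfl
      · exact s8Psi_g1 n
      · exact s8Psi_g2 n
      · exact s8Psi_g3 n
    intro q
    induction q using MvPolynomial.induction_on' with
    | monomial u a =>
      rw [show monomial u a = a • monomial u (1:ℤ) by rw [smul_monomial, smul_eq_mul, mul_one],
        smul_mul_assoc, map_smul, mono, smul_zero]
    | add p q hp hq => rw [add_mul, map_add, hp, hq, add_zero]
  have H : ∀ q, s8Psi n (q * p) = 0 := by
    refine Submodule.span_induction (fun x hx q => main x hx q) (fun q => by rw [mul_zero, map_zero])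
      (fun x y _ _ hx hy q => by rw [mul_add, map_add, hx, hy, add_zero])
      (fun r x _ hx q => by
        rw [smul_eq_mul, show q * (r * x) = (q * r) * x by ring]; exact hx (q * r)) hp
  simpa using H 1

set_option maxHeartbeats 1600000 in
/-- `ℤ[x,y,z]/(xⁿ-1, yⁿ-1, z² - n(Σ xⁱ)z)` (the projective class ring of `H_n(0,q)`)
is a free `ℤ`-module of rank `2n²` with basis the images of
`{xⁱyʲ, xⁱyʲz : 0 ≤ i,j ≤ n-1}`. -/
theorem stmt_8 (n : ℕ) (hn : 3 ≤ n)
    (I : Ideal (MvPolynomial (Fin 3) ℤ))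
    (hI : I = Ideal.span
      { X 0 ^ n - 1, X 1 ^ n - 1,
        X 2 ^ 2 - (n : MvPolynomial (Fin 3) ℤ) * (∑ i ∈ range n, X 0 ^ i) * X 2 }) :
    ∃ B : Module.Basis (Fin n × Fin n × Bool) ℤ (MvPolynomial (Fin 3) ℤ ⧸ I),
      ∀ (i j : Fin n) (t : Bool),
        B (i, j, t) = Ideal.Quotient.mk I
          (X 0 ^ (i : ℕ) * X 1 ^ (j : ℕ) * X 2 ^ (if t then 1 else 0)) := by
  haveI : NeZero n := ⟨by omega⟩
  let w : Fin n × Fin n × Bool → MvPolynomial (Fin 3) ℤ :=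
    fun p => X 0 ^ (p.1 : ℕ) * X 1 ^ (p.2.1 : ℕ) * X 2 ^ (if p.2.2 then 1 else 0)
  let v : Fin n × Fin n × Bool → MvPolynomial (Fin 3) ℤ ⧸ I := fun p => Ideal.Quotient.mk I (w p)
  -- relations in the quotient
  have hmem : ∀ g ∈ ({ X 0 ^ n - 1, X 1 ^ n - 1,
      X 2 ^ 2 - (n : MvPolynomial (Fin 3) ℤ) * (∑ i ∈ range n, X 0 ^ i) * X 2 } :
      Set (MvPolynomial (Fin 3) ℤ)), g ∈ I := by
    intro g hg; rw [hI]; exact Ideal.subset_span hg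
  have hx0 : (Ideal.Quotient.mk I (X 0 : MvPolynomial (Fin 3) ℤ)) ^ n = 1 := by
    have h : Ideal.Quotient.mk I (X 0 ^ n - 1) = 0 :=
      Ideal.Quotient.eq_zero_iff_mem.mpr (hmem _ (by left; rfl))
    rw [map_sub, map_one, map_pow, sub_eq_zero] at h
    exact h
  have hx1 : (Ideal.Quotient.mk I (X 1 : MvPolynomial (Fin 3) ℤ)) ^ n = 1 := by
    have h : Ideal.Quotient.mk I (X 1 ^ n - 1) = 0 :=
      Ideal.Quotient.eq_zero_iff_mem.mpr (hmem _ (by right; left; rfl))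
    rw [map_sub, map_one, map_pow, sub_eq_zero] at h
    exact h
  have hx2 : (Ideal.Quotient.mk I (X 2 : MvPolynomial (Fin 3) ℤ)) ^ 2
      = (n : MvPolynomial (Fin 3) ℤ ⧸ I) * (∑ i ∈ range n, (Ideal.Quotient.mk I (X 0 : MvPolynomial (Fin 3) ℤ)) ^ i)
        * Ideal.Quotient.mk I (X 2) := by
    have h : Ideal.Quotient.mk I
        (X 2 ^ 2 - (n : MvPolynomial (Fin 3) ℤ) * (∑ i ∈ range n, X 0 ^ i) * X 2) = 0 :=
      Ideal.Quotient.eq_zero_iff_mem.mpr (hmem _ (by right; right; rfl))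
    rw [map_sub, sub_eq_zero, map_pow, map_mul, map_mul, map_natCast, map_sum] at h
    simpa [map_pow] using h
  set S := Submodule.span ℤ (Set.range v) with hS
  -- every monomial image is in S
  have key : ∀ c a b : ℕ, Ideal.Quotient.mk I (X 0 ^ a * X 1 ^ b * X 2 ^ c) ∈ S := by
    intro c
    induction c using Nat.twoStepInduction with
    | zero =>
      intro a b
      have hv : Ideal.Quotient.mk I (X 0 ^ a * X 1 ^ b * X 2 ^ 0)
          = v ((a : Fin n), (b : Fin n), false) := by
        show _ = Ideal.Quotient.mk I (X 0 ^ (((a : Fin n)) : ℕ) * X 1 ^ (((b : Fin n)) : ℕ)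
          * X 2 ^ (if false then 1 else 0))
        simp only [Fin.val_natCast, Bool.false_eq_true, if_false, map_mul, map_pow, pow_zero]
        rw [pow_eq_pow_mod a hx0, pow_eq_pow_mod b hx1]
      rw [hv]
      exact Submodule.subset_span ⟨_, rfl⟩
    | one =>
      intro a b
      have hv : Ideal.Quotient.mk I (X 0 ^ a * X 1 ^ b * X 2 ^ 1)
          = v ((a : Fin n), (b : Fin n), true) := by
        show _ = Ideal.Quotient.mk I (X 0 ^ (((a : Fin n)) : ℕ) * X 1 ^ (((b : Fin n)) : ℕ)
          * X 2 ^ (if true then 1 else 0))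
        simp only [Fin.val_natCast, if_true, map_mul, map_pow]
        rw [pow_eq_pow_mod a hx0, pow_eq_pow_mod b hx1]
      rw [hv]
      exact Submodule.subset_span ⟨_, rfl⟩
    | more k ih ih1 =>
      intro a b
      have hsplit : Ideal.Quotient.mk I (X 0 ^ a * X 1 ^ b * X 2 ^ (k + 2))
          = ∑ i ∈ range n, (n : ℤ) • Ideal.Quotient.mk I (X 0 ^ (a + i) * X 1 ^ b * X 2 ^ (k + 1)) := by
        simp only [map_mul, map_pow]
        rw [show (Ideal.Quotient.mk I (X 2 : MvPolynomial (Fin 3) ℤ)) ^ (k + 2)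
            = (Ideal.Quotient.mk I (X 2 : MvPolynomial (Fin 3) ℤ)) ^ k
              * (Ideal.Quotient.mk I (X 2 : MvPolynomial (Fin 3) ℤ)) ^ 2 by ring, hx2]
        rw [Finset.mul_sum, Finset.sum_mul, Finset.mul_sum, Finset.mul_sum]
        refine Finset.sum_congr rfl fun i _ => ?_
        rw [zsmul_eq_mul]
        push_cast
        ring
      rw [hsplit]
      exact Submodule.sum_mem _ fun i _ => Submodule.smul_mem _ _ (ih1 (a + i) b)
  -- closure under multiplication by the generators
  have mulX : ∀ k : Fin 3, ∀ s ∈ S, s * Ideal.Quotient.mk I (X k) ∈ S := by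
    intro k s hs
    refine Submodule.span_induction ?_ (by simp) ?_ ?_ hs
    · rintro _ ⟨⟨i, j, t⟩, rfl⟩
      have hw : v (i, j, t) * Ideal.Quotient.mk I (X k)
          = Ideal.Quotient.mk I (w (i, j, t) * X k) := (map_mul _ _ _).symm
      rw [hw]
      obtain ⟨kv, hk⟩ := k
      interval_cases kv
      all_goals simp only [show ∀ h, (⟨0, h⟩ : Fin 3) = 0 from fun _ => rfl,
        show ∀ h, (⟨1, h⟩ : Fin 3) = 1 from fun _ => rfl,
        show ∀ h, (⟨2, h⟩ : Fin 3) = 2 from fun _ => rfl]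
      · rw [show w (i, j, t) * X 0
            = X 0 ^ ((i : ℕ) + 1) * X 1 ^ (j : ℕ) * X 2 ^ (if t then 1 else 0) by
          simp only [w]; ring]
        exact key _ _ _
      · rw [show w (i, j, t) * X 1
            = X 0 ^ (i : ℕ) * X 1 ^ ((j : ℕ) + 1) * X 2 ^ (if t then 1 else 0) by
          simp only [w]; ring]
        exact key _ _ _
      · rw [show w (i, j, t) * X 2
            = X 0 ^ (i : ℕ) * X 1 ^ (j : ℕ) * X 2 ^ ((if t then 1 else 0) + 1) by
          simp only [w]; ring]
        exact key _ _ _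
    · intro x y _ _ hx hy
      rw [add_mul]; exact Submodule.add_mem _ hx hy
    · intro r x _ hx
      rw [smul_mul_assoc]; exact Submodule.smul_mem _ _ hx
  -- spanning
  have hspan : S = ⊤ := by
    rw [eq_top_iff]
    rintro q -
    obtain ⟨p, rfl⟩ := Ideal.Quotient.mk_surjective q
    induction p using MvPolynomial.induction_on with
    | C r =>
      have h1 : (1 : MvPolynomial (Fin 3) ℤ ⧸ I) ∈ S := by
        have := key 0 0 0
        simpa using this
      have : Ideal.Quotient.mk I (C r : MvPolynomial (Fin 3) ℤ) = r • (1 : MvPolynomial (Fin 3) ℤ ⧸ I) := by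
        rw [show (C r : MvPolynomial (Fin 3) ℤ) = r • 1 from by
          rw [MvPolynomial.smul_eq_C_mul, mul_one], map_zsmul, map_one]
      rw [this]
      exact Submodule.smul_mem _ _ h1
    | add p q hp hq =>
      rw [map_add]; exact Submodule.add_mem _ hp hq
    | mul_X p i hp =>
      rw [map_mul]; exact mulX i _ hp
  -- linear independence
  have hli : LinearIndependent ℤ v := by
    rw [linearIndependent_iff]
    intro l hl
    let mkL : MvPolynomial (Fin 3) ℤ →ₗ[ℤ] MvPolynomial (Fin 3) ℤ ⧸ I :=
      (Ideal.Quotient.mk I).toAddMonoidHom.toIntLinearMap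
    have hveq : v = ⇑mkL ∘ w := by
      funext p
      rfl
    have hvl : Finsupp.linearCombination ℤ v l = mkL (Finsupp.linearCombination ℤ w l) := by
      rw [Finsupp.apply_linearCombination, hveq]
    have hmemI : Finsupp.linearCombination ℤ w l ∈ I := by
      rw [← Ideal.Quotient.eq_zero_iff_mem]
      rw [hvl] at hl
      exact hl
    have hzero : s8Psi n (Finsupp.linearCombination ℤ w l) = 0 :=
      s8Psi_span n (hI ▸ hmemI)
    have hPsiw : ∀ p : Fin n × Fin n × Bool, s8Psi n (w p) = Finsupp.single p 1 := by
      rintro ⟨i, j, t⟩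
      have hmon : w (i, j, t) = monomial (Finsupp.single 0 (i : ℕ) + Finsupp.single 1 (j : ℕ)
          + Finsupp.single 2 (if t then 1 else 0)) (1 : ℤ) := by
        simp only [w, X_pow_eq_monomial, monomial_mul, mul_one]
      rw [hmon, s8Psi_monomial]
      have e0 : ((Finsupp.single 0 (i : ℕ) + Finsupp.single 1 (j : ℕ)
          + Finsupp.single 2 (if t then 1 else 0) : Fin 3 →₀ ℕ)) 0 = (i : ℕ) := by
        simp [Finsupp.single_apply]
      have e1 : ((Finsupp.single 0 (i : ℕ) + Finsupp.single 1 (j : ℕ)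
          + Finsupp.single 2 (if t then 1 else 0) : Fin 3 →₀ ℕ)) 1 = (j : ℕ) := by
        simp [Finsupp.single_apply]
      have e2 : ((Finsupp.single 0 (i : ℕ) + Finsupp.single 1 (j : ℕ)
          + Finsupp.single 2 (if t then 1 else 0) : Fin 3 →₀ ℕ)) 2 = (if t then 1 else 0) := by
        simp [Finsupp.single_apply]
      rw [e0, e1, e2]
      cases t
      · show s8F n (i : ℕ) (j : ℕ) 0 = _
        rw [show s8F n (i : ℕ) (j : ℕ) 0
            = Finsupp.single (((i : ℕ) : Fin n), ((j : ℕ) : Fin n), false) 1 from rfl,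
          Fin.cast_val_eq_self, Fin.cast_val_eq_self]
      · show s8F n (i : ℕ) (j : ℕ) 1 = _
        rw [show s8F n (i : ℕ) (j : ℕ) 1
            = Finsupp.single (((i : ℕ) : Fin n), ((j : ℕ) : Fin n), true) 1 from rfl,
          Fin.cast_val_eq_self, Fin.cast_val_eq_self]
    have : (l : Fin n × Fin n × Bool →₀ ℤ) = 0 := by
      have h2 : s8Psi n (Finsupp.linearCombination ℤ w l)
          = Finsupp.linearCombination ℤ (fun p => Finsupp.single p (1:ℤ)) l := by
        have hfun : ⇑(s8Psi n) ∘ w = fun p => Finsupp.single p (1:ℤ) := funext hPsiw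
        rw [Finsupp.apply_linearCombination, hfun]
      have h3 : Finsupp.linearCombination ℤ (fun p => Finsupp.single p (1:ℤ)) l = l := by
        rw [Finsupp.linearCombination_apply]
        simp only [Finsupp.smul_single, smul_eq_mul, mul_one]
        exact Finsupp.sum_single l
      rw [h2, h3] at hzero
      exact hzero
    exact this
  refine ⟨Module.Basis.mk hli (hspan ▸ le_rfl), ?_⟩
  intro i j t
  rw [Module.Basis.mk_apply]
end

section
/- Let K be a field of characteristic not dividing n, n ≥ 3, and let R = K[x,y,z]/(x^n - 1, y^n - 1, z² - n²z, (1-x)z, (1-y)z). Then R is isomorphic as a K-algebra to K^{n²+1}. -/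
open MvPolynomial Finset

/-- Reindexing a product of copies of `K` along an equivalence of index types, as an
algebra equivalence. -/
noncomputable def piReindexAlg (K : Type*) [CommSemiring K] {ι κ : Type*} (e : ι ≃ κ) :
    (ι → K) ≃ₐ[K] (κ → K) :=
  AlgEquiv.ofAlgHom
    (Pi.algHom _ _ fun k => Pi.evalAlgHom _ _ (e.symm k))
    (Pi.algHom _ _ fun i => Pi.evalAlgHom _ _ (e i))
    (AlgHom.ext fun f => funext fun k => by simp)
    (AlgHom.ext fun f => funext fun i => by simp)

set_option maxHeartbeats 1000000 in
/-- `K[x,y,z]/(xⁿ-1, yⁿ-1, z²-n²z, (1-x)z, (1-y)z)` is isomorphic as a `K`-algebra to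
`K^{n²+1}`, for `K` a field whose characteristic does not divide `n` (containing a
primitive `n`-th root of unity). This is the semisimple quotient
`R_p(𝓗_n(q))/J(R_p(𝓗_n(q)))`. -/
theorem stmt_9 (n : ℕ) (hn : 3 ≤ n) (K : Type*) [Field K]
    (hchar : ¬ (ringChar K ∣ n)) (q : K) (hq : IsPrimitiveRoot q n)
    (I : Ideal (MvPolynomial (Fin 3) K))
    (hI : I = Ideal.span
      { X 0 ^ n - 1, X 1 ^ n - 1, X 2 ^ 2 - (n : MvPolynomial (Fin 3) K) ^ 2 * X 2,
        (1 - X 0) * X 2, (1 - X 1) * X 2 }) :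
    Nonempty ((MvPolynomial (Fin 3) K ⧸ I) ≃ₐ[K] (Fin (n ^ 2 + 1) → K)) := by
  classical
  have hn0 : 0 < n := by omega
  have hnK : (n : K) ≠ 0 := fun h => hchar ((ringChar.spec K n).mp h)
  -- evaluation points
  set v : ((Fin n × Fin n) ⊕ (Fin 1)) → Fin 3 → K :=
    Sum.elim (fun p => ![q ^ (p.1 : ℕ), q ^ (p.2 : ℕ), 0]) (fun _ => ![1, 1, (n : K) ^ 2])
    with hv
  -- the evaluation algebra map
  set φ : MvPolynomial (Fin 3) K →ₐ[K] (((Fin n × Fin n) ⊕ (Fin 1)) → K) :=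
    Pi.algHom _ _ (fun e => aeval (v e)) with hφ
  have hφapp : ∀ (p : MvPolynomial (Fin 3) K) (e), φ p e = aeval (v e) p := fun _ _ => rfl
  -- the ideal is contained in the kernel of φ
  have hqn : ∀ i : ℕ, (q ^ i) ^ n = 1 := by
    intro i
    rw [← pow_mul, mul_comm, pow_mul, hq.pow_eq_one, one_pow]
  have hker : ∀ p ∈ I, φ p = 0 := by
    intro p hp
    have hle : I ≤ RingHom.ker (φ : MvPolynomial (Fin 3) K →+* (((Fin n × Fin n) ⊕ (Fin 1)) → K)) := by
      rw [hI, Ideal.span_le]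
      rintro p (rfl | rfl | rfl | rfl | rfl) <;>
        · rw [SetLike.mem_coe, RingHom.mem_ker]
          show φ _ = 0
          funext e
          rcases e with ⟨i, j⟩ | u <;>
            simp [hφapp, hv, hqn, Matrix.cons_val_zero, Matrix.cons_val_one,
              Matrix.cons_val_two, Matrix.vecTail, Matrix.vecHead] <;> ring
    exact RingHom.mem_ker.mp (hle hp)
  -- the induced map on the quotient
  set φbar : (MvPolynomial (Fin 3) K ⧸ I) →ₐ[K] (((Fin n × Fin n) ⊕ (Fin 1)) → K) :=
    Ideal.Quotient.liftₐ I φ hker with hφbar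
  have hφbar_mk : ∀ p, φbar (Ideal.Quotient.mk I p) = φ p := fun p => by
    rw [hφbar, Ideal.Quotient.liftₐ_apply]
    rfl
  -- the kernels of the evaluations at the points v e
  set Ke : ((Fin n × Fin n) ⊕ (Fin 1)) → Ideal (MvPolynomial (Fin 3) K) :=
    fun e => RingHom.ker ((aeval (v e) : MvPolynomial (Fin 3) K →ₐ[K] K) : MvPolynomial (Fin 3) K →+* K)
    with hKe
  have hmax : ∀ e, (Ke e).IsMaximal := by
    intro e
    exact RingHom.ker_isMaximal_of_surjective _
      (fun c => ⟨C c, by simp [Algebra.algebraMap_self_apply]⟩)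
  have hvinj : Function.Injective v := by
    rintro (⟨i, j⟩ | u) (⟨i', j'⟩ | u') h
    · have h0 := congrFun h 0
      have h1 := congrFun h 1
      simp [hv] at h0 h1
      have hi := hq.pow_inj i.2 i'.2 h0
      have hj := hq.pow_inj j.2 j'.2 h1
      exact congrArg Sum.inl (Prod.ext (Fin.ext hi) (Fin.ext hj))
    · have h2 := congrFun h 2
      simp [hv, Matrix.cons_val_two, Matrix.vecTail, Matrix.vecHead] at h2
      exact absurd h2.symm (pow_ne_zero 2 hnK)
    · have h2 := congrFun h 2
      simp [hv, Matrix.cons_val_two, Matrix.vecTail, Matrix.vecHead] at h2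
      exact absurd h2 hnK
    · simp [Subsingleton.elim u u']
  have hKeinj : ∀ e e', Ke e = Ke e' → e = e' := by
    intro e e' h
    apply hvinj
    funext i
    have hmem : X i - C (v e i) ∈ Ke e := by
      rw [hKe, RingHom.mem_ker]
      simp [Algebra.algebraMap_self_apply]
    rw [h] at hmem
    have h0 : aeval (v e') (X i - C (v e i)) = 0 := hmem
    simp only [map_sub, aeval_X, aeval_C, Algebra.algebraMap_self_apply, sub_eq_zero] at h0
    exact h0.symm
  have hcop : Pairwise (Function.onFun IsCoprime Ke) := fun e e' hne =>
    Ideal.isCoprime_iff_sup_eq.mpr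
      ((hmax e).coprime_of_ne (hmax e') (fun h => hne (hKeinj e e' h)))
  -- surjectivity of φ via CRT
  have hφsurj : Function.Surjective φ := by
    intro c
    obtain ⟨y, hy⟩ := Ideal.quotientInfToPiQuotient_surj hcop
      (fun e => Ideal.Quotient.mk (Ke e) (C (c e)))
    obtain ⟨x, rfl⟩ := Ideal.Quotient.mk_surjective y
    refine ⟨x, funext fun e => ?_⟩
    have he := congrFun hy e
    rw [Ideal.quotientInfToPiQuotient_mk'] at he
    have hmem : x - C (c e) ∈ Ke e := Ideal.Quotient.eq.mp he
    have h0 : aeval (v e) (x - C (c e)) = 0 := hmem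
    simp only [map_sub, aeval_C, Algebra.algebraMap_self_apply, sub_eq_zero] at h0
    rw [hφapp, h0]
  have hφbarsurj : Function.Surjective φbar := by
    intro c
    obtain ⟨p, hp⟩ := hφsurj c
    exact ⟨Ideal.Quotient.mk I p, by rw [hφbar_mk, hp]⟩
  -- relations in the quotient
  have hmemI : ∀ p ∈ ({X 0 ^ n - 1, X 1 ^ n - 1,
      X 2 ^ 2 - (n : MvPolynomial (Fin 3) K) ^ 2 * X 2,
      (1 - X 0) * X 2, (1 - X 1) * X 2} : Set (MvPolynomial (Fin 3) K)),
      Ideal.Quotient.mk I p = 0 := by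
    intro p hp
    exact Ideal.Quotient.eq_zero_iff_mem.mpr (hI ▸ Ideal.subset_span hp)
  have hx : (Ideal.Quotient.mk I (X 0)) ^ n = 1 := by
    have h := hmemI (X 0 ^ n - 1) (Set.mem_insert _ _)
    rw [map_sub, map_pow, map_one, sub_eq_zero] at h
    exact h
  have hy : (Ideal.Quotient.mk I (X 1)) ^ n = 1 := by
    have h := hmemI (X 1 ^ n - 1) (by simp)
    rw [map_sub, map_pow, map_one, sub_eq_zero] at h
    exact h
  have hxz : Ideal.Quotient.mk I (X 0) * Ideal.Quotient.mk I (X 2) = Ideal.Quotient.mk I (X 2) := by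
    have h := hmemI ((1 - X 0) * X 2) (by simp)
    rw [map_mul, map_sub, map_one, sub_mul, one_mul, sub_eq_zero] at h
    exact h.symm
  have hyz : Ideal.Quotient.mk I (X 1) * Ideal.Quotient.mk I (X 2) = Ideal.Quotient.mk I (X 2) := by
    have h := hmemI ((1 - X 1) * X 2) (by simp)
    rw [map_mul, map_sub, map_one, sub_mul, one_mul, sub_eq_zero] at h
    exact h.symm
  have hsmul : ∀ (c : K) (p : MvPolynomial (Fin 3) K),
      c • Ideal.Quotient.mk I p = Ideal.Quotient.mk I (C c * p) := by
    intro c p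
    rw [← smul_eq_C_mul]
    exact (map_smul (Ideal.Quotient.mkₐ K I) c p).symm
  have hz2 : Ideal.Quotient.mk I (X 2) * Ideal.Quotient.mk I (X 2)
      = ((n : K) ^ 2) • Ideal.Quotient.mk I (X 2) := by
    have h := hmemI (X 2 ^ 2 - (n : MvPolynomial (Fin 3) K) ^ 2 * X 2) (by simp)
    rw [map_sub, map_pow, map_mul, map_pow, sub_eq_zero] at h
    rw [hsmul, ← sq, h, map_mul]
    congr 1
    rw [← map_pow]
    congr 1
    rw [map_pow, map_natCast]
  have hxpz : ∀ a : ℕ, (Ideal.Quotient.mk I (X 0)) ^ a * Ideal.Quotient.mk I (X 2)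
      = Ideal.Quotient.mk I (X 2) := by
    intro a
    induction a with
    | zero => simp
    | succ a ih => rw [pow_succ, mul_assoc, hxz, ih]
  have hypz : ∀ a : ℕ, (Ideal.Quotient.mk I (X 1)) ^ a * Ideal.Quotient.mk I (X 2)
      = Ideal.Quotient.mk I (X 2) := by
    intro a
    induction a with
    | zero => simp
    | succ a ih => rw [pow_succ, mul_assoc, hyz, ih]
  -- the spanning family
  set f : ((Fin n × Fin n) ⊕ (Fin 1)) → (MvPolynomial (Fin 3) K ⧸ I) :=
    Sum.elim (fun p => Ideal.Quotient.mk I (X 0) ^ (p.1 : ℕ) * Ideal.Quotient.mk I (X 1) ^ (p.2 : ℕ))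
      (fun _ => Ideal.Quotient.mk I (X 2)) with hf
  have hfm : ∀ e, f e ∈ Submodule.span K (Set.range f) :=
    fun e => Submodule.subset_span ⟨e, rfl⟩
  have hone : (1 : MvPolynomial (Fin 3) K ⧸ I) ∈ Submodule.span K (Set.range f) := by
    have h1 : f (Sum.inl ((⟨0, hn0⟩ : Fin n), (⟨0, hn0⟩ : Fin n))) = 1 := by
      rw [hf]
      dsimp only [Sum.elim_inl]
      rw [pow_zero, pow_zero, mul_one]
    exact h1 ▸ hfm _
  have hcases : ∀ g ∈ Set.range f, ∀ i : Fin 3,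
      g * Ideal.Quotient.mk I (X i) ∈ Submodule.span K (Set.range f) := by
    rintro g ⟨e, rfl⟩ i
    rcases e with ⟨a, b⟩ | u
    · fin_cases i
      · have h : f (Sum.inl (a, b)) * Ideal.Quotient.mk I (X 0)
            = Ideal.Quotient.mk I (X 0) ^ (((a : ℕ) + 1) % n)
              * Ideal.Quotient.mk I (X 1) ^ (b : ℕ) := by
          rw [hf]
          simp only [Sum.elim_inl]
          rw [mul_right_comm, ← pow_succ, ← pow_eq_pow_mod _ hx]
        rw [show ((⟨0, by omega⟩ : Fin 3)) = 0 from rfl, h]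
        exact hfm (Sum.inl (⟨((a : ℕ) + 1) % n, Nat.mod_lt _ hn0⟩, b))
      · have h : f (Sum.inl (a, b)) * Ideal.Quotient.mk I (X 1)
            = Ideal.Quotient.mk I (X 0) ^ (a : ℕ)
              * Ideal.Quotient.mk I (X 1) ^ (((b : ℕ) + 1) % n) := by
          rw [hf]
          simp only [Sum.elim_inl]
          rw [mul_assoc, ← pow_succ, ← pow_eq_pow_mod _ hy]
        rw [show ((⟨1, by omega⟩ : Fin 3)) = 1 from rfl, h]
        exact hfm (Sum.inl (a, ⟨((b : ℕ) + 1) % n, Nat.mod_lt _ hn0⟩))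
      · have h : f (Sum.inl (a, b)) * Ideal.Quotient.mk I (X 2)
            = Ideal.Quotient.mk I (X 2) := by
          rw [hf]
          simp only [Sum.elim_inl]
          rw [mul_assoc, hypz, hxpz]
        rw [show ((⟨2, by omega⟩ : Fin 3)) = 2 from rfl, h]
        exact hfm (Sum.inr 0)
    · fin_cases i
      · have h : f (Sum.inr u) * Ideal.Quotient.mk I (X 0) = Ideal.Quotient.mk I (X 2) := by
          rw [hf]; simp only [Sum.elim_inr]; rw [mul_comm, hxz]
        rw [show ((⟨0, by omega⟩ : Fin 3)) = 0 from rfl, h]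
        exact hfm (Sum.inr 0)
      · have h : f (Sum.inr u) * Ideal.Quotient.mk I (X 1) = Ideal.Quotient.mk I (X 2) := by
          rw [hf]; simp only [Sum.elim_inr]; rw [mul_comm, hyz]
        rw [show ((⟨1, by omega⟩ : Fin 3)) = 1 from rfl, h]
        exact hfm (Sum.inr 0)
      · have h : f (Sum.inr u) * Ideal.Quotient.mk I (X 2)
            = ((n : K) ^ 2) • Ideal.Quotient.mk I (X 2) := by
          rw [hf]; simp only [Sum.elim_inr]; rw [hz2]
        rw [show ((⟨2, by omega⟩ : Fin 3)) = 2 from rfl, h]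
        exact Submodule.smul_mem _ _ (hfm (Sum.inr 0))
  have hmulX : ∀ (i : Fin 3), ∀ m ∈ Submodule.span K (Set.range f),
      m * Ideal.Quotient.mk I (X i) ∈ Submodule.span K (Set.range f) := by
    intro i m hm
    refine Submodule.span_induction
      (p := fun m _ => m * Ideal.Quotient.mk I (X i) ∈ Submodule.span K (Set.range f))
      (fun g hg => hcases g hg i) ?_ ?_ ?_ hm
    · simp
    · intro x y _ _ hx' hy'
      rw [add_mul]; exact Submodule.add_mem _ hx' hy'
    · intro a x _ hx'
      rw [smul_mul_assoc]; exact Submodule.smul_mem _ _ hx'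
  have hMtop : Submodule.span K (Set.range f) = ⊤ := by
    rw [eq_top_iff]
    rintro a -
    obtain ⟨p, rfl⟩ := Ideal.Quotient.mk_surjective a
    induction p using MvPolynomial.induction_on with
    | C a =>
      have h : Ideal.Quotient.mk I (C a) = a • (1 : MvPolynomial (Fin 3) K ⧸ I) := by
        rw [show (1 : MvPolynomial (Fin 3) K ⧸ I) = Ideal.Quotient.mk I 1 from rfl,
          hsmul, mul_one]
      rw [h]
      exact Submodule.smul_mem _ _ hone
    | add p r hp hr =>
      rw [map_add]; exact Submodule.add_mem _ hp hr
    | mul_X p i hp =>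
      rw [map_mul]
      exact hmulX i _ hp
  -- finite dimensionality and dimension count
  have hfin : Module.Finite K (MvPolynomial (Fin 3) K ⧸ I) :=
    ⟨hMtop ▸ Submodule.fg_span (Set.finite_range f)⟩
  have hcard : Fintype.card ((Fin n × Fin n) ⊕ (Fin 1)) = n ^ 2 + 1 := by
    simp [sq]
  have hrankA : Module.finrank K (MvPolynomial (Fin 3) K ⧸ I) ≤ n ^ 2 + 1 := by
    have h1 : Module.finrank K (MvPolynomial (Fin 3) K ⧸ I)
        = Module.finrank K (Submodule.span K (Set.range f)) := by
      rw [hMtop]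
      exact (finrank_top K _).symm
    have h2 : Module.finrank K (Submodule.span K (Set.range f))
        ≤ (Set.range f).toFinset.card :=
      finrank_span_le_card (Set.range f)
    have h3 : (Set.range f).toFinset.card ≤ n ^ 2 + 1 := by
      rw [Set.toFinset_range]
      calc (Finset.image f Finset.univ).card ≤ Finset.univ.card := Finset.card_image_le
        _ = n ^ 2 + 1 := by rw [Finset.card_univ, hcard]
    omega
  -- injectivity of φbar
  have hrankPi : Module.finrank K (((Fin n × Fin n) ⊕ (Fin 1)) → K) = n ^ 2 + 1 := by
    rw [Module.finrank_pi, hcard]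
  have hinj : Function.Injective φbar := by
    rw [show (φbar : (MvPolynomial (Fin 3) K ⧸ I) → _) = φbar.toLinearMap from rfl,
      ← LinearMap.ker_eq_bot]
    have hrange : LinearMap.range φbar.toLinearMap = ⊤ :=
      LinearMap.range_eq_top.mpr hφbarsurj
    have hrn := LinearMap.finrank_range_add_finrank_ker (φbar.toLinearMap)
    rw [hrange] at hrn
    have h0 : Module.finrank K (LinearMap.ker φbar.toLinearMap) = 0 := by
      have htop : Module.finrank K
          (⊤ : Submodule K (((Fin n × Fin n) ⊕ (Fin 1)) → K)) = n ^ 2 + 1 := by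
        rw [finrank_top, hrankPi]
      omega
    exact Submodule.finrank_eq_zero.mp h0
  -- conclude
  let eqv : ((Fin n × Fin n) ⊕ (Fin 1)) ≃ Fin (n ^ 2 + 1) :=
    (Equiv.sumCongr finProdFinEquiv (Equiv.refl (Fin 1))).trans
      ((finSumFinEquiv).trans (finCongr (by rw [sq])))
  exact ⟨(AlgEquiv.ofBijective φbar ⟨hinj, hφbarsurj⟩).trans (piReindexAlg K eqv)⟩
end

section
/- Let K be an algebraically closed field containing a primitive n-th root of unity q, n ≥ 3, and let R = K[x,y,z]/(x^n - 1, y^n - 1, z² - n²z, (1-x)z). Then R is isomorphic as a K-algebra to K^{n(n+1)}. -/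
open MvPolynomial Finset

lemma eval_pi_surjective {K : Type*} [Field K] {σ : Type*} {ι : Type*} [Fintype ι]
    [DecidableEq ι] (pt : ι → σ → K) (hpt : Function.Injective pt) :
    Function.Surjective (fun (p : MvPolynomial σ K) (i : ι) => eval (pt i) p) := by
  classical
  have key : ∀ k : ι, ∃ f : MvPolynomial σ K,
      eval (pt k) f = 1 ∧ ∀ l, l ≠ k → eval (pt l) f = 0 := by
    intro k
    have hg : ∀ l : ι, ∃ g : MvPolynomial σ K,
        (l ≠ k → eval (pt k) g = 1 ∧ eval (pt l) g = 0) ∧ (l = k → g = 1) := by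
      intro l
      by_cases hlk : l = k
      · exact ⟨1, fun h => absurd hlk h, fun _ => rfl⟩
      · have hne : pt k ≠ pt l := fun h => hlk (hpt h).symm
        obtain ⟨m, hm⟩ := Function.ne_iff.mp hne
        refine ⟨C ((pt k m - pt l m)⁻¹) * (X m - C (pt l m)), fun _ => ?_, fun h => absurd h hlk⟩
        constructor
        · simp [inv_mul_cancel₀ (sub_ne_zero.mpr hm)]
        · simp
    choose g hg1 hg2 using hg
    refine ⟨∏ l ∈ univ.erase k, g l, ?_, ?_⟩
    · rw [map_prod]
      exact Finset.prod_eq_one fun l hl => (hg1 l (Finset.ne_of_mem_erase hl)).1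
    · intro l hl
      rw [map_prod]
      exact Finset.prod_eq_zero (Finset.mem_erase.mpr ⟨hl, Finset.mem_univ l⟩)
        ((hg1 l hl).2)
  choose f hf1 hf2 using key
  intro v
  refine ⟨∑ k, C (v k) * f k, ?_⟩
  funext j
  simp only [map_sum, map_mul, eval_C]
  rw [Finset.sum_eq_single j (fun k _ hk => by rw [hf2 k j hk.symm, mul_zero])
    (fun h => absurd (Finset.mem_univ j) h)]
  rw [hf1, mul_one]

/-- The `n(n+1)` evaluation points for `K[x,y,z]/(xⁿ-1, yⁿ-1, z²-n²z, (1-x)z)`. -/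
noncomputable def stmtPts {K : Type*} [Field K] (n : ℕ) (q : K) :
    Fin (n * (n + 1)) → Fin 3 → K := fun k =>
  if (k : ℕ) < n * n then ![q ^ ((k : ℕ) / n), q ^ ((k : ℕ) % n), 0]
  else ![1, q ^ ((k : ℕ) - n * n), (n : K) ^ 2]

lemma stmtPts_injective {K : Type*} [Field K] {n : ℕ} {q : K} (hn0 : 0 < n)
    (hnK : (n : K) ≠ 0) (hq : IsPrimitiveRoot q n) :
    Function.Injective (stmtPts n q) := by
  have hNN : n * (n + 1) = n * n + n := by ring
  intro k l h
  have hkl : (k : ℕ) < n * n + n := hNN ▸ k.isLt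
  have hll : (l : ℕ) < n * n + n := hNN ▸ l.isLt
  unfold stmtPts at h
  by_cases hk : (k : ℕ) < n * n <;> by_cases hl : (l : ℕ) < n * n
  · rw [if_pos hk, if_pos hl] at h
    have h0 := congrFun h 0
    have h1 := congrFun h 1
    simp only [Matrix.cons_val_zero, Matrix.cons_val_one, Matrix.head_cons] at h0 h1
    have hd : (k : ℕ) / n = (l : ℕ) / n :=
      hq.pow_inj ((Nat.div_lt_iff_lt_mul hn0).mpr hk) ((Nat.div_lt_iff_lt_mul hn0).mpr hl) h0
    have hm : (k : ℕ) % n = (l : ℕ) % n :=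
      hq.pow_inj (Nat.mod_lt _ hn0) (Nat.mod_lt _ hn0) h1
    have : (k : ℕ) = (l : ℕ) := by
      rw [← Nat.div_add_mod (k : ℕ) n, ← Nat.div_add_mod (l : ℕ) n, hd, hm]
    exact Fin.ext this
  · exfalso
    rw [if_pos hk, if_neg hl] at h
    have h2 := congrFun h 2
    simp only [Matrix.cons_val_two, Matrix.tail_cons, Matrix.head_cons] at h2
    exact pow_ne_zero 2 hnK h2.symm
  · exfalso
    rw [if_neg hk, if_pos hl] at h
    have h2 := congrFun h 2
    simp only [Matrix.cons_val_two, Matrix.tail_cons, Matrix.head_cons] at h2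
    exact pow_ne_zero 2 hnK h2
  · rw [if_neg hk, if_neg hl] at h
    have h1 := congrFun h 1
    simp only [Matrix.cons_val_one, Matrix.head_cons] at h1
    have hd : (k : ℕ) - n * n = (l : ℕ) - n * n :=
      hq.pow_inj (by omega) (by omega) h1
    exact Fin.ext (by omega)

lemma stmtPts_gen_eval {K : Type*} [Field K] {n : ℕ} {q : K} (hq : IsPrimitiveRoot q n) :
    ∀ g ∈ ({X 0 ^ n - 1, X 1 ^ n - 1,
      X 2 ^ 2 - (n : MvPolynomial (Fin 3) K) ^ 2 * X 2,
      (1 - X 0) * X 2} : Set (MvPolynomial (Fin 3) K)),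
      ∀ k, eval (stmtPts n q k) g = 0 := by
  intro g hg k
  simp only [Set.mem_insert_iff, Set.mem_singleton_iff] at hg
  rcases hg with rfl | rfl | rfl | rfl <;>
    (unfold stmtPts
     split_ifs with hk)
  · simp only [map_sub, map_pow, map_one, eval_X, Matrix.cons_val_zero]
    rw [← pow_mul, mul_comm ((k : ℕ) / n) n, pow_mul, hq.pow_eq_one, one_pow, sub_self]
  · simp only [map_sub, map_pow, map_one, eval_X, Matrix.cons_val_zero, one_pow, sub_self]
  · simp only [map_sub, map_pow, map_one, eval_X, Matrix.cons_val_one, Matrix.head_cons,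
      Matrix.cons_val_zero]
    rw [← pow_mul, mul_comm ((k : ℕ) % n) n, pow_mul, hq.pow_eq_one, one_pow, sub_self]
  · simp only [map_sub, map_pow, map_one, eval_X, Matrix.cons_val_one, Matrix.head_cons,
      Matrix.cons_val_zero]
    rw [← pow_mul, mul_comm ((k : ℕ) - n * n) n, pow_mul, hq.pow_eq_one, one_pow, sub_self]
  · simp only [map_sub, map_mul, map_pow, eval_X, map_natCast,
      Matrix.cons_val_two, Matrix.tail_cons, Matrix.head_cons]
    ring
  · simp only [map_sub, map_mul, map_pow, eval_X, map_natCast,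
      Matrix.cons_val_two, Matrix.tail_cons, Matrix.head_cons]
    ring
  · simp only [map_mul, map_sub, map_one, eval_X,
      Matrix.cons_val_zero, Matrix.cons_val_two, Matrix.tail_cons, Matrix.head_cons]
    ring
  · simp only [map_mul, map_sub, map_one, eval_X,
      Matrix.cons_val_zero, Matrix.cons_val_two, Matrix.tail_cons, Matrix.head_cons]
    ring

/-- The spanning monomial family in the quotient. -/
noncomputable def stmtFam {K : Type*} [Field K] (n : ℕ)
    (I : Ideal (MvPolynomial (Fin 3) K)) :
    Fin (n * (n + 1)) → (MvPolynomial (Fin 3) K ⧸ I) := fun k =>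
  if (k : ℕ) < n * n then
    Ideal.Quotient.mkₐ K I (X 0 ^ ((k : ℕ) / n) * X 1 ^ ((k : ℕ) % n))
  else Ideal.Quotient.mkₐ K I (X 1 ^ ((k : ℕ) - n * n) * X 2)

set_option maxHeartbeats 1000000 in
lemma stmtFam_span {K : Type*} [Field K] {n : ℕ} (hn0 : 0 < n)
    {I : Ideal (MvPolynomial (Fin 3) K)}
    (hI : I = Ideal.span
      { X 0 ^ n - 1, X 1 ^ n - 1, X 2 ^ 2 - (n : MvPolynomial (Fin 3) K) ^ 2 * X 2,
        (1 - X 0) * X 2 }) :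
    Submodule.span K (Set.range (stmtFam n I)) = ⊤ := by
  have hNN : n * (n + 1) = n * n + n := by ring
  set mka : MvPolynomial (Fin 3) K →ₐ[K] (MvPolynomial (Fin 3) K ⧸ I) :=
    Ideal.Quotient.mkₐ K I with hmka_def
  have hmem : ∀ g ∈ ({X 0 ^ n - 1, X 1 ^ n - 1,
      X 2 ^ 2 - (n : MvPolynomial (Fin 3) K) ^ 2 * X 2,
      (1 - X 0) * X 2} : Set (MvPolynomial (Fin 3) K)), mka g = 0 := by
    intro g hg
    rw [hmka_def, Ideal.Quotient.mkₐ_eq_mk, Ideal.Quotient.eq_zero_iff_mem, hI]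
    exact Ideal.subset_span hg
  have hxn : mka (X 0) ^ n = 1 := by
    have := hmem (X 0 ^ n - 1) (by simp)
    rw [map_sub, map_pow, map_one, sub_eq_zero] at this
    exact this
  have hyn : mka (X 1) ^ n = 1 := by
    have := hmem (X 1 ^ n - 1) (by simp)
    rw [map_sub, map_pow, map_one, sub_eq_zero] at this
    exact this
  have hzz : mka (X 2) ^ 2 = (n : MvPolynomial (Fin 3) K ⧸ I) ^ 2 * mka (X 2) := by
    have := hmem (X 2 ^ 2 - (n : MvPolynomial (Fin 3) K) ^ 2 * X 2) (by simp)
    rw [map_sub, map_pow, map_mul, map_pow, map_natCast, sub_eq_zero] at this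
    exact this
  have hxz : mka (X 0) * mka (X 2) = mka (X 2) := by
    have := hmem ((1 - X 0) * X 2) (by simp)
    rw [map_mul, map_sub, map_one, sub_mul, one_mul, sub_eq_zero] at this
    exact this.symm
  have hxa : ∀ a : ℕ, mka (X 0) ^ a = mka (X 0) ^ (a % n) := by
    intro a
    conv_lhs => rw [← Nat.div_add_mod a n]
    rw [pow_add, pow_mul, hxn, one_pow, one_mul]
  have hyb : ∀ b : ℕ, mka (X 1) ^ b = mka (X 1) ^ (b % n) := by
    intro b
    conv_lhs => rw [← Nat.div_add_mod b n]
    rw [pow_add, pow_mul, hyn, one_pow, one_mul]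
  have hxaz : ∀ a : ℕ, mka (X 0) ^ a * mka (X 2) = mka (X 2) := by
    intro a
    induction a with
    | zero => rw [pow_zero, one_mul]
    | succ a ih => rw [pow_succ, mul_assoc, hxz, ih]
  have hzc : ∀ c : ℕ, mka (X 2) ^ (c + 1)
      = ((n : MvPolynomial (Fin 3) K ⧸ I) ^ 2) ^ c * mka (X 2) := by
    intro c
    induction c with
    | zero => rw [pow_one, pow_zero, one_mul]
    | succ c ih =>
      rw [pow_succ, ih, mul_assoc, ← sq, hzz, pow_succ]
      ring
  have hmonoT : ∀ a b c : ℕ,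
      mka (X 0 ^ a * X 1 ^ b * X 2 ^ c) ∈ Submodule.span K (Set.range (stmtFam n I)) := by
    intro a b c
    rw [map_mul, map_mul, map_pow, map_pow, map_pow]
    have hbn : b % n < n := Nat.mod_lt _ hn0
    cases c with
    | zero =>
      rw [pow_zero, mul_one, hxa, hyb]
      have han : a % n < n := Nat.mod_lt _ hn0
      have hmul : (a % n) * n + n ≤ n * n := by
        calc (a % n) * n + n = (a % n + 1) * n := by ring
        _ ≤ n * n := Nat.mul_le_mul_right n han
      have hlt : (a % n) * n + b % n < n * n :=
        Nat.lt_of_lt_of_le (Nat.add_lt_add_left hbn ((a % n) * n)) hmul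
      have hidx : (a % n) * n + b % n < n * (n + 1) := by
        rw [hNN]; exact hlt.trans_le (Nat.le_add_right _ _)
      have hval : stmtFam n I ⟨(a % n) * n + b % n, hidx⟩
          = mka (X 0) ^ (a % n) * mka (X 1) ^ (b % n) := by
        unfold stmtFam
        rw [if_pos hlt, ← hmka_def, map_mul, map_pow, map_pow]
        congr 2
        · show ((a % n) * n + b % n) / n = a % n
          rw [mul_comm, Nat.mul_add_div hn0, Nat.div_eq_of_lt hbn, add_zero]
        · show ((a % n) * n + b % n) % n = b % n
          rw [mul_comm, Nat.mul_add_mod, Nat.mod_eq_of_lt hbn]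
      rw [← hval]
      exact Submodule.subset_span ⟨_, rfl⟩
    | succ c =>
      rw [hzc, hyb b]
      have hre : mka (X 0) ^ a * mka (X 1) ^ (b % n) *
          (((n : MvPolynomial (Fin 3) K ⧸ I) ^ 2) ^ c * mka (X 2))
          = ((n : MvPolynomial (Fin 3) K ⧸ I) ^ 2) ^ c *
            (mka (X 1) ^ (b % n) * (mka (X 0) ^ a * mka (X 2))) := by ring
      rw [hre, hxaz]
      have hcast : ((n : MvPolynomial (Fin 3) K ⧸ I) ^ 2) ^ c
          = algebraMap K _ (((n : K) ^ 2) ^ c) := by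
        rw [map_pow, map_pow, map_natCast]
      rw [hcast, ← Algebra.smul_def]
      refine Submodule.smul_mem _ _ (Submodule.subset_span ?_)
      have hidx : n * n + b % n < n * (n + 1) := by omega
      refine ⟨⟨n * n + b % n, hidx⟩, ?_⟩
      have hco : ((⟨n * n + b % n, hidx⟩ : Fin (n * (n + 1))) : ℕ) = n * n + b % n := rfl
      unfold stmtFam
      rw [hco, if_neg (by omega), ← hmka_def, map_mul, map_pow]
      congr 3
      omega
  rw [Submodule.eq_top_iff']
  intro x
  obtain ⟨p, rfl⟩ := Ideal.Quotient.mkₐ_surjective K I x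
  rw [← hmka_def]
  induction p using MvPolynomial.induction_on' with
  | monomial u a =>
    rw [monomial_eq, Finsupp.prod_fintype _ _ (fun i => pow_zero _), Fin.prod_univ_three,
      ← MvPolynomial.smul_eq_C_mul, map_smul]
    exact Submodule.smul_mem _ _ (hmonoT _ _ _)
  | add p r hp hr =>
    rw [map_add]
    exact Submodule.add_mem _ hp hr

set_option maxHeartbeats 1000000 in
/-- `K[x,y,z]/(xⁿ-1, yⁿ-1, z²-n²z, (1-x)z)` is isomorphic as a `K`-algebra to
`K^{n(n+1)}`, for `K` algebraically closed containing a primitive `n`-th root of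
unity. This is the semisimple quotient `R_p(H_n(0,q))/J(R_p(H_n(0,q)))`. -/
theorem stmt_10 (n : ℕ) (hn : 3 ≤ n) (K : Type*) [Field K] [IsAlgClosed K]
    (q : K) (hq : IsPrimitiveRoot q n)
    (I : Ideal (MvPolynomial (Fin 3) K))
    (hI : I = Ideal.span
      { X 0 ^ n - 1, X 1 ^ n - 1, X 2 ^ 2 - (n : MvPolynomial (Fin 3) K) ^ 2 * X 2,
        (1 - X 0) * X 2 }) :
    Nonempty ((MvPolynomial (Fin 3) K ⧸ I) ≃ₐ[K] (Fin (n * (n + 1)) → K)) := by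
  classical
  have hn0 : 0 < n := by omega
  haveI : NeZero n := ⟨by omega⟩
  have hnK : (n : K) ≠ 0 := hq.neZero'.out
  -- the evaluation algebra homomorphism
  let Φ : MvPolynomial (Fin 3) K →ₐ[K] (Fin (n * (n + 1)) → K) :=
    Pi.algHom K _ (fun k => (MvPolynomial.aeval (stmtPts n q k) :
      MvPolynomial (Fin 3) K →ₐ[K] K))
  have hΦapp : ∀ p k, Φ p k = eval (stmtPts n q k) p := by
    intro p k
    show aeval (stmtPts n q k) p = _
    rw [← coe_aeval_eq_eval]
    rfl
  have hker : ∀ a ∈ I, Φ a = 0 := by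
    rw [hI]
    intro a ha
    refine Submodule.span_induction (p := fun x _ => Φ x = 0)
      (fun g hg => funext fun k => by rw [hΦapp]; exact stmtPts_gen_eval hq g hg k)
      (map_zero Φ)
      (fun x y _ _ hx hy => show Φ (x + y) = 0 by
        rw [map_add, show Φ x = 0 from hx, show Φ y = 0 from hy, add_zero])
      (fun r x _ hx => show Φ (r • x) = 0 by
        rw [smul_eq_mul, map_mul, show Φ x = 0 from hx, mul_zero]) ha
  have hΦsurj : Function.Surjective Φ := by
    intro v
    obtain ⟨p, hp⟩ := eval_pi_surjective (stmtPts n q) (stmtPts_injective hn0 hnK hq) v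
    exact ⟨p, funext fun k => by rw [hΦapp]; exact congrFun hp k⟩
  have hT := stmtFam_span hn0 hI
  haveI hfin : Module.Finite K (MvPolynomial (Fin 3) K ⧸ I) := by
    refine ⟨⟨Finset.image (stmtFam n I) Finset.univ, ?_⟩⟩
    rw [Finset.coe_image, Finset.coe_univ, Set.image_univ]
    exact hT
  have hrank_le : Module.finrank K (MvPolynomial (Fin 3) K ⧸ I) ≤ n * (n + 1) := by
    calc Module.finrank K (MvPolynomial (Fin 3) K ⧸ I)
        = Module.finrank K (⊤ : Submodule K (MvPolynomial (Fin 3) K ⧸ I)) :=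
          (finrank_top K _).symm
      _ = Module.finrank K (Submodule.span K (Set.range (stmtFam n I))) := by rw [← hT]
      _ ≤ Fintype.card (Fin (n * (n + 1))) := finrank_range_le_card (stmtFam n I)
      _ = n * (n + 1) := Fintype.card_fin _
  let φ : (MvPolynomial (Fin 3) K ⧸ I) →ₐ[K] (Fin (n * (n + 1)) → K) :=
    Ideal.Quotient.liftₐ I Φ hker
  have hφsurj : Function.Surjective φ := by
    intro v
    obtain ⟨p, hp⟩ := hΦsurj v
    refine ⟨Ideal.Quotient.mk I p, ?_⟩
    show Ideal.Quotient.liftₐ I Φ hker (Ideal.Quotient.mk I p) = v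
    rw [Ideal.Quotient.liftₐ_apply]
    exact hp
  have hrank_ge : n * (n + 1) ≤ Module.finrank K (MvPolynomial (Fin 3) K ⧸ I) := by
    have h1 := LinearMap.finrank_range_le φ.toLinearMap
    have h2 : LinearMap.range φ.toLinearMap = ⊤ := LinearMap.range_eq_top.mpr hφsurj
    rw [h2, finrank_top, Module.finrank_fin_fun] at h1
    exact h1
  have hrank : Module.finrank K (MvPolynomial (Fin 3) K ⧸ I)
      = Module.finrank K (Fin (n * (n + 1)) → K) := by
    rw [Module.finrank_fin_fun]
    omega
  have hφinj : Function.Injective φ :=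
    (LinearMap.injective_iff_surjective_of_finrank_eq_finrank
      (f := φ.toLinearMap) hrank).mpr hφsurj
  exact ⟨AlgEquiv.ofBijective φ ⟨hφinj, hφsurj⟩⟩
end

section
/- Let K be an algebraically closed field with char K ∤ n, n ≥ 3, and let A = K[x,y,z]/(x^n - 1, y^n - 1, z² - (Σ_{i,j=0}^{n-1} x^i y^j)·z). Then the Jacobson radical of A is the ideal generated by (1-x̄)·z̄ and (1-ȳ)·z̄, where x̄, ȳ, z̄ denote the images of x, y, z in A. -/
open MvPolynomial Finset

section StmtAux

open Polynomial


lemma univ_dvd (n : ℕ) (hn : 0 < n) (K : Type*) [Field K] [IsAlgClosed K]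
    (hK : (n : K) ≠ 0) (q : K[X]) (h : ∀ a : K, a ^ n = 1 → q.eval a = 0) :
    (Polynomial.X ^ n - 1 : K[X]) ∣ q := by
  have : NeZero (n : K) := ⟨hK⟩
  obtain ⟨ζ, hζ⟩ := HasEnoughRootsOfUnity.exists_primitiveRoot K n
  rw [Polynomial.X_pow_sub_one_eq_prod hn hζ]
  refine Finset.prod_dvd_of_coprime
    ((Polynomial.pairwise_coprime_X_sub_C Function.injective_id).set_pairwise _) fun a ha => ?_
  exact Polynomial.dvd_iff_isRoot.mpr (h a ((Polynomial.mem_nthRootsFinset hn (1 : K)).mp ha))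

noncomputable def e1 (K : Type*) [Field K] : MvPolynomial (Fin 1) K ≃ₐ[K] K[X] :=
  (MvPolynomial.renameEquiv K (Equiv.equivPUnit.{1,1} (Fin 1))).trans (MvPolynomial.pUnitAlgEquiv K)

lemma e1_X (K : Type*) [Field K] : e1 K (MvPolynomial.X 0) = Polynomial.X := by
  simp [e1]

lemma e1_eval (K : Type*) [Field K] (b : K) (c : MvPolynomial (Fin 1) K) :
    MvPolynomial.eval (fun _ => b) c = (e1 K c).eval b := by
  have : (MvPolynomial.aeval (fun _ => b) : MvPolynomial (Fin 1) K →ₐ[K] K)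
      = (Polynomial.aeval b).comp (e1 K).toAlgHom := by
    apply MvPolynomial.algHom_ext
    intro i
    fin_cases i
    simp [e1_X]
  calc MvPolynomial.eval (fun _ => b) c
      = MvPolynomial.aeval (fun _ => b) c := by
        rw [← MvPolynomial.coe_aeval_eq_eval]; rfl
    _ = (Polynomial.aeval b).comp (e1 K).toAlgHom c := by rw [this]
    _ = (e1 K c).eval b := by
        rw [← Polynomial.coe_aeval_eq_eval]; rfl

lemma u1_dvd (n : ℕ) (hn : 0 < n) (K : Type*) [Field K] [IsAlgClosed K]
    (hK : (n : K) ≠ 0) (c : MvPolynomial (Fin 1) K)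
    (h : ∀ b : K, b ^ n = 1 → MvPolynomial.eval (fun _ => b) c = 0) :
    (MvPolynomial.X 0 ^ n - 1 : MvPolynomial (Fin 1) K) ∣ c := by
  have hd : (Polynomial.X ^ n - 1 : K[X]) ∣ e1 K c :=
    univ_dvd n hn K hK _ fun a ha => by rw [← e1_eval]; exact h a ha
  obtain ⟨d, hd⟩ := hd
  refine ⟨(e1 K).symm d, ?_⟩
  apply (e1 K).injective
  rw [map_mul, AlgEquiv.apply_symm_apply, hd, map_sub, map_pow, map_one, e1_X]

lemma biv_mem (n : ℕ) (hn : 0 < n) (K : Type*) [Field K] [IsAlgClosed K] (hK : (n : K) ≠ 0)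
    (p : MvPolynomial (Fin 2) K)
    (h : ∀ x : Fin 2 → K, (x 0) ^ n = 1 → (x 1) ^ n = 1 → MvPolynomial.eval x p = 0) :
    ∃ u v : MvPolynomial (Fin 2) K,
      p = (MvPolynomial.X 0 ^ n - 1) * u + (MvPolynomial.X 1 ^ n - 1) * v := by
  set e := MvPolynomial.finSuccEquiv K 1 with he
  set P : Polynomial (MvPolynomial (Fin 1) K) := e p with hP
  have hM : (Polynomial.X ^ n - 1 : Polynomial (MvPolynomial (Fin 1) K)).Monic := by
    simpa using Polynomial.monic_X_pow_sub_C (1 : MvPolynomial (Fin 1) K) hn.ne'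
  set M : Polynomial (MvPolynomial (Fin 1) K) := Polynomial.X ^ n - 1 with hMdef
  have hdiv : P %ₘ M = P - M * (P /ₘ M) := by
    rw [eq_sub_iff_add_eq]
    exact Polynomial.modByMonic_add_div P M
  have hdegM : M.degree = (n : ℕ) := by
    simpa [hMdef] using Polynomial.degree_X_pow_sub_C hn (1 : MvPolynomial (Fin 1) K)
  have hdegR : (P %ₘ M).degree < (n : ℕ) := hdegM ▸ Polynomial.degree_modByMonic_lt P hM
  have hcoeff : ∀ j, (MvPolynomial.X 0 ^ n - 1 : MvPolynomial (Fin 1) K) ∣ (P %ₘ M).coeff j := by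
    intro j
    apply u1_dvd n hn K hK
    intro b hb
    set φb : MvPolynomial (Fin 1) K →+* K := MvPolynomial.eval (fun _ => b) with hφb
    have hPmap : ∀ a : K, a ^ n = 1 → (P.map φb).eval a = 0 := by
      intro a ha
      have hc := MvPolynomial.eval_eq_eval_mv_eval' (fun _ => b) a p
      have hc' : (P.map φb).eval a = MvPolynomial.eval (Fin.cons a fun _ => b) p := by
        rw [hP, he]; exact hc.symm
      rw [hc']
      refine h _ ?_ ?_
      · rw [Fin.cons_zero]; exact ha
      · have hx1 : (Fin.cons a (fun _ => b) : Fin 2 → K) 1 = b := rfl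
        rw [hx1]; exact hb
    have hMmap : M.map φb = Polynomial.X ^ n - 1 := by
      simp [hMdef, Polynomial.map_sub, Polynomial.map_pow]
    have hRmap : ((P %ₘ M).map φb) = 0 := by
      have hdvd : (Polynomial.X ^ n - 1 : K[X]) ∣ (P %ₘ M).map φb := by
        apply univ_dvd n hn K hK
        intro a ha
        rw [hdiv, Polynomial.map_sub, Polynomial.map_mul, hMmap]
        simp [Polynomial.eval_mul, hPmap a ha, ha, sub_eq_zero]
      apply Polynomial.eq_zero_of_dvd_of_degree_lt hdvd
      calc ((P %ₘ M).map φb).degree ≤ (P %ₘ M).degree := Polynomial.degree_map_le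
        _ < (n : ℕ) := hdegR
        _ = (Polynomial.X ^ n - 1 : K[X]).degree := by
            simpa using (Polynomial.degree_X_pow_sub_C hn (1 : K)).symm
    have := congrArg (fun q => Polynomial.coeff q j) hRmap
    simpa [Polynomial.coeff_map] using this
  obtain ⟨D, hD⟩ := (Polynomial.C_dvd_iff_dvd_coeff _ _).mpr hcoeff
  refine ⟨e.symm (P /ₘ M), e.symm D, ?_⟩
  have hPform : P = M * (P /ₘ M) + Polynomial.C (MvPolynomial.X 0 ^ n - 1) * D := by
    rw [← hD, hdiv]; ring
  have h1 : e.symm M = MvPolynomial.X 0 ^ n - 1 := by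
    apply e.injective
    rw [AlgEquiv.apply_symm_apply, map_sub, map_pow, map_one, he,
      MvPolynomial.finSuccEquiv_X_zero]
  have h2' : e (MvPolynomial.X 1 ^ n - 1) = Polynomial.C (MvPolynomial.X 0 ^ n - 1) := by
    have h1' : (1 : Fin 2) = Fin.succ 0 := rfl
    rw [map_sub, map_pow, map_one, h1', he, MvPolynomial.finSuccEquiv_X_succ]
    simp [map_sub, map_pow, map_one]
  have h2 : e.symm (Polynomial.C (MvPolynomial.X 0 ^ n - 1)) = MvPolynomial.X 1 ^ n - 1 := by
    apply e.injective
    rw [AlgEquiv.apply_symm_apply, h2']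
  have hfin : p = e.symm (M * (P /ₘ M) + Polynomial.C (MvPolynomial.X 0 ^ n - 1) * D) := by
    rw [← hPform, hP, AlgEquiv.symm_apply_apply]
  rw [hfin, map_add, map_mul, map_mul, h1, h2]

noncomputable def SS (n : ℕ) (K : Type*) [Field K] : MvPolynomial (Fin 3) K :=
  ∑ i ∈ Finset.range n, ∑ j ∈ Finset.range n, MvPolynomial.X 0 ^ i * MvPolynomial.X 1 ^ j

noncomputable def SS2 (n : ℕ) (K : Type*) [Field K] : MvPolynomial (Fin 2) K :=
  ∑ i ∈ Finset.range n, ∑ j ∈ Finset.range n, MvPolynomial.X 0 ^ i * MvPolynomial.X 1 ^ j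

noncomputable def Jbig (n : ℕ) (K : Type*) [Field K] : Ideal (MvPolynomial (Fin 3) K) :=
  Ideal.span
    { MvPolynomial.X 0 ^ n - 1, MvPolynomial.X 1 ^ n - 1,
      MvPolynomial.X 2 ^ 2 - SS n K * MvPolynomial.X 2,
      (1 - MvPolynomial.X 0) * MvPolynomial.X 2, (1 - MvPolynomial.X 1) * MvPolynomial.X 2 }

section fin3
variable (n : ℕ) (K : Type*) [Field K]

lemma mJ1 : (MvPolynomial.X 0 ^ n - 1 : MvPolynomial (Fin 3) K) ∈ Jbig n K :=
  Ideal.subset_span (by simp)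

lemma mJ2 : (MvPolynomial.X 1 ^ n - 1 : MvPolynomial (Fin 3) K) ∈ Jbig n K :=
  Ideal.subset_span (by simp)

lemma mJ3 : (MvPolynomial.X 2 ^ 2 - SS n K * MvPolynomial.X 2 : MvPolynomial (Fin 3) K) ∈ Jbig n K :=
  Ideal.subset_span (by simp)

lemma mJ4 : ((1 - MvPolynomial.X 0) * MvPolynomial.X 2 : MvPolynomial (Fin 3) K) ∈ Jbig n K :=
  Ideal.subset_span (by simp)

lemma mJ5 : ((1 - MvPolynomial.X 1) * MvPolynomial.X 2 : MvPolynomial (Fin 3) K) ∈ Jbig n K :=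
  Ideal.subset_span (by simp)

lemma hXj_mem : ∀ i : Fin 2,
    MvPolynomial.X (Fin.castSucc i) * MvPolynomial.X 2 - MvPolynomial.X 2 ∈ Jbig n K := by
  intro i
  fin_cases i
  · simp only [Fin.zero_eta]
    have h := neg_mem (mJ4 n K)
    convert h using 1
    have : (Fin.castSucc (0 : Fin 2)) = (0 : Fin 3) := rfl
    rw [this]; ring
  · simp only [Fin.mk_one]
    have h := neg_mem (mJ5 n K)
    convert h using 1
    have : (Fin.castSucc (1 : Fin 2)) = (1 : Fin 3) := rfl
    rw [this]; ring

lemma G1 (q : MvPolynomial (Fin 2) K) :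
    MvPolynomial.rename Fin.castSucc q * MvPolynomial.X 2
      - MvPolynomial.C (MvPolynomial.eval (fun _ => (1 : K)) q) * MvPolynomial.X 2
      ∈ Jbig n K := by
  induction q using MvPolynomial.induction_on with
  | C a => rw [MvPolynomial.rename_C, MvPolynomial.eval_C, sub_self]; exact Ideal.zero_mem _
  | add p q hp hq =>
    have h := Ideal.add_mem _ hp hq
    convert h using 1
    rw [map_add, map_add, map_add]
    ring
  | mul_X p j hp =>
    have h := Ideal.add_mem _ (Ideal.mul_mem_right (MvPolynomial.X (Fin.castSucc j)) _ hp)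
      (Ideal.mul_mem_left _ (MvPolynomial.C (MvPolynomial.eval (fun _ => (1 : K)) p))
        (hXj_mem n K j))
    convert h using 1
    rw [map_mul, MvPolynomial.rename_X, map_mul, MvPolynomial.eval_X]
    ring

lemma SS_eq_rename : SS n K = MvPolynomial.rename Fin.castSucc (SS2 n K) := by
  simp [SS, SS2, map_sum, map_mul, map_pow, MvPolynomial.rename_X]

lemma SS2_eval_one : MvPolynomial.eval (fun _ => (1 : K)) (SS2 n K) = (n : K) ^ 2 := by
  simp [SS2, Finset.sum_const, Finset.card_range]
  ring

lemma G2 : (MvPolynomial.X 2 ^ 2 - MvPolynomial.C ((n : K) ^ 2) * MvPolynomial.X 2 :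
    MvPolynomial (Fin 3) K) ∈ Jbig n K := by
  have h := Ideal.add_mem _ (mJ3 n K) (G1 n K (SS2 n K))
  convert h using 1
  rw [← SS_eq_rename, SS2_eval_one]
  ring

lemma normal_form (f : MvPolynomial (Fin 3) K) :
    ∃ (q : MvPolynomial (Fin 2) K) (c : K),
      f - (MvPolynomial.rename Fin.castSucc q + MvPolynomial.C c * MvPolynomial.X 2)
        ∈ Jbig n K := by
  induction f using MvPolynomial.induction_on with
  | C a =>
    refine ⟨MvPolynomial.C a, 0, ?_⟩
    rw [MvPolynomial.rename_C, map_zero]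
    simpa using Ideal.zero_mem (Jbig n K)
  | add p q hp hq =>
    obtain ⟨qp, cp, h1⟩ := hp
    obtain ⟨qq, cq, h2⟩ := hq
    refine ⟨qp + qq, cp + cq, ?_⟩
    have h := Ideal.add_mem _ h1 h2
    convert h using 1
    rw [map_add, map_add]
    ring
  | mul_X p i hp =>
    obtain ⟨q, c, h1⟩ := hp
    fin_cases i
    · simp only [Fin.zero_eta]
      refine ⟨q * MvPolynomial.X 0, c, ?_⟩
      have h := Ideal.add_mem _ (Ideal.mul_mem_right (MvPolynomial.X 0) _ h1)
        (Ideal.mul_mem_left _ (MvPolynomial.C c) (hXj_mem n K 0))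
      convert h using 1
      rw [map_mul, MvPolynomial.rename_X]
      have : (Fin.castSucc (0 : Fin 2)) = (0 : Fin 3) := rfl
      rw [this]
      ring
    · simp only [Fin.mk_one]
      refine ⟨q * MvPolynomial.X 1, c, ?_⟩
      have h := Ideal.add_mem _ (Ideal.mul_mem_right (MvPolynomial.X 1) _ h1)
        (Ideal.mul_mem_left _ (MvPolynomial.C c) (hXj_mem n K 1))
      convert h using 1
      rw [map_mul, MvPolynomial.rename_X]
      have : (Fin.castSucc (1 : Fin 2)) = (1 : Fin 3) := rfl
      rw [this]
      ring
    · simp only [show (⟨2, by omega⟩ : Fin 3) = (2 : Fin 3) from rfl]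
      refine ⟨0, MvPolynomial.eval (fun _ => (1 : K)) q + c * (n : K) ^ 2, ?_⟩
      have h := Ideal.add_mem _ (Ideal.add_mem _
        (Ideal.mul_mem_right (MvPolynomial.X 2) _ h1) (G1 n K q))
        (Ideal.mul_mem_left _ (MvPolynomial.C c) (G2 n K))
      convert h using 1
      rw [map_zero, map_add, map_mul]
      ring

lemma hS_fact : SS n K = (∑ i ∈ Finset.range n, MvPolynomial.X 0 ^ i) *
    (∑ j ∈ Finset.range n, MvPolynomial.X 1 ^ j) := by
  rw [SS, Finset.sum_mul]
  exact Finset.sum_congr rfl fun i _ => (Finset.mul_sum _ _ _).symm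

lemma hgeom0 : ((1 : MvPolynomial (Fin 3) K) - MvPolynomial.X 0) *
    (∑ i ∈ Finset.range n, MvPolynomial.X 0 ^ i) = 1 - MvPolynomial.X 0 ^ n := by
  linear_combination -mul_geom_sum (MvPolynomial.X 0 : MvPolynomial (Fin 3) K) n

lemma hgeom1 : ((1 : MvPolynomial (Fin 3) K) - MvPolynomial.X 1) *
    (∑ i ∈ Finset.range n, MvPolynomial.X 1 ^ i) = 1 - MvPolynomial.X 1 ^ n := by
  linear_combination -mul_geom_sum (MvPolynomial.X 1 : MvPolynomial (Fin 3) K) n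

lemma g4sq :
    (((1 : MvPolynomial (Fin 3) K) - MvPolynomial.X 0) * MvPolynomial.X 2) ^ 2 ∈
      Ideal.span { MvPolynomial.X 0 ^ n - 1, MvPolynomial.X 1 ^ n - 1,
        MvPolynomial.X 2 ^ 2 - SS n K * MvPolynomial.X 2 } := by
  set T : MvPolynomial (Fin 3) K := ∑ j ∈ Finset.range n, MvPolynomial.X 1 ^ j with hT
  have key : (1 - MvPolynomial.X 0) * SS n K
      = (1 - MvPolynomial.X 0 ^ n) * T := by
    rw [hS_fact]
    linear_combination T * hgeom0 n K
  have h3 : (MvPolynomial.X 2 ^ 2 - SS n K * MvPolynomial.X 2 : MvPolynomial (Fin 3) K)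
      ∈ Ideal.span { MvPolynomial.X 0 ^ n - 1, MvPolynomial.X 1 ^ n - 1,
        MvPolynomial.X 2 ^ 2 - SS n K * MvPolynomial.X 2 } := Ideal.subset_span (by simp)
  have h1 : (MvPolynomial.X 0 ^ n - 1 : MvPolynomial (Fin 3) K)
      ∈ Ideal.span { MvPolynomial.X 0 ^ n - 1, MvPolynomial.X 1 ^ n - 1,
        MvPolynomial.X 2 ^ 2 - SS n K * MvPolynomial.X 2 } := Ideal.subset_span (by simp)
  have h := Ideal.add_mem _
    (Ideal.mul_mem_left _ ((1 - MvPolynomial.X 0) ^ 2) h3)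
    (Ideal.mul_mem_left _ (-(1 - MvPolynomial.X 0) * T * MvPolynomial.X 2) h1)
  convert h using 1
  linear_combination (MvPolynomial.X 2 * (1 - MvPolynomial.X 0)) * key

lemma g5sq :
    (((1 : MvPolynomial (Fin 3) K) - MvPolynomial.X 1) * MvPolynomial.X 2) ^ 2 ∈
      Ideal.span { MvPolynomial.X 0 ^ n - 1, MvPolynomial.X 1 ^ n - 1,
        MvPolynomial.X 2 ^ 2 - SS n K * MvPolynomial.X 2 } := by
  set T : MvPolynomial (Fin 3) K := ∑ i ∈ Finset.range n, MvPolynomial.X 0 ^ i with hT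
  have key : (1 - MvPolynomial.X 1) * SS n K
      = (1 - MvPolynomial.X 1 ^ n) * T := by
    rw [hS_fact]
    linear_combination T * hgeom1 n K
  have h3 : (MvPolynomial.X 2 ^ 2 - SS n K * MvPolynomial.X 2 : MvPolynomial (Fin 3) K)
      ∈ Ideal.span { MvPolynomial.X 0 ^ n - 1, MvPolynomial.X 1 ^ n - 1,
        MvPolynomial.X 2 ^ 2 - SS n K * MvPolynomial.X 2 } := Ideal.subset_span (by simp)
  have h2 : (MvPolynomial.X 1 ^ n - 1 : MvPolynomial (Fin 3) K)
      ∈ Ideal.span { MvPolynomial.X 0 ^ n - 1, MvPolynomial.X 1 ^ n - 1,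
        MvPolynomial.X 2 ^ 2 - SS n K * MvPolynomial.X 2 } := Ideal.subset_span (by simp)
  have h := Ideal.add_mem _
    (Ideal.mul_mem_left _ ((1 - MvPolynomial.X 1) ^ 2) h3)
    (Ideal.mul_mem_left _ (-(1 - MvPolynomial.X 1) * T * MvPolynomial.X 2) h2)
  convert h using 1
  linear_combination (MvPolynomial.X 2 * (1 - MvPolynomial.X 1)) * key

end fin3


end StmtAux

/-- The Jacobson radical of the projective class algebra
`A = K[x,y,z]/(xⁿ-1, yⁿ-1, z² - (Σ xⁱyʲ)z)` of `𝓗_n(q)` is generated by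
`(1-x̄)z̄` and `(1-ȳ)z̄`. -/
theorem stmt_11 (n : ℕ) (hn : 3 ≤ n) (K : Type*) [Field K] [IsAlgClosed K]
    (hchar : ¬ (ringChar K ∣ n))
    (I : Ideal (MvPolynomial (Fin 3) K))
    (hI : I = Ideal.span
      { X 0 ^ n - 1, X 1 ^ n - 1,
        X 2 ^ 2 - (∑ i ∈ range n, ∑ j ∈ range n, X 0 ^ i * X 1 ^ j) * X 2 }) :
    (⊥ : Ideal (MvPolynomial (Fin 3) K ⧸ I)).jacobson =
      Ideal.span { Ideal.Quotient.mk I ((1 - X 0) * X 2),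
                   Ideal.Quotient.mk I ((1 - X 1) * X 2) } := by
  classical
  have hn0 : 0 < n := by omega
  have hK : ((n : ℕ) : K) ≠ 0 := fun h0 => hchar ((ringChar.spec K n).mp h0)
  have hIS : I = Ideal.span
      { MvPolynomial.X 0 ^ n - 1, MvPolynomial.X 1 ^ n - 1,
        MvPolynomial.X 2 ^ 2 - SS n K * MvPolynomial.X 2 } := by rw [hI]; rfl
  have hIJ : I ≤ Jbig n K := by
    rw [hIS, Ideal.span_le]
    rintro x hx
    simp only [Set.mem_insert_iff, Set.mem_singleton_iff] at hx
    rcases hx with rfl | rfl | rfl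
    exacts [mJ1 n K, mJ2 n K, mJ3 n K]
  rw [← Ideal.radical_eq_jacobson]
  apply le_antisymm
  · -- hard direction
    intro α hα
    obtain ⟨f, rfl⟩ := Ideal.Quotient.mk_surjective α
    obtain ⟨k, hk⟩ := Ideal.mem_radical_iff.mp hα
    rw [Ideal.mem_bot, ← map_pow, Ideal.Quotient.eq_zero_iff_mem] at hk
    have hfrad : f ∈ (Jbig n K).radical := Ideal.mem_radical_iff.mpr ⟨k, hIJ hk⟩
    rw [← MvPolynomial.vanishingIdeal_zeroLocus_eq_radical (K := K)] at hfrad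
    have hvan := MvPolynomial.mem_vanishingIdeal_iff.mp hfrad
    -- zero locus points
    have hSSeval : ∀ x : Fin 3 → K, x 0 = 1 → x 1 = 1 →
        MvPolynomial.eval x (SS n K) = (n : K) ^ 2 := by
      intro x h0 h1
      simp [SS, h0, h1, Finset.sum_const, Finset.card_range]
      ring
    have hptA : ∀ x : Fin 3 → K, (x 0) ^ n = 1 → (x 1) ^ n = 1 → x 2 = 0 →
        x ∈ MvPolynomial.zeroLocus K (Jbig n K) := by
      intro x h0 h1 h2 p hp
      have hle : Jbig n K ≤ RingHom.ker (MvPolynomial.eval x) := by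
        rw [Jbig]
        refine Ideal.span_le.mpr ?_
        rintro g hg
        simp only [Set.mem_insert_iff, Set.mem_singleton_iff] at hg
        rcases hg with rfl | rfl | rfl | rfl | rfl <;>
          simp [RingHom.mem_ker, h0, h1, h2, sub_eq_zero]
      exact RingHom.mem_ker.mp (hle hp)
    have hptB : (![1, 1, (n : K) ^ 2] : Fin 3 → K) ∈ MvPolynomial.zeroLocus K (Jbig n K) := by
      intro p hp
      have hle : Jbig n K ≤ RingHom.ker (MvPolynomial.eval (![1, 1, (n : K) ^ 2] : Fin 3 → K)) := by
        rw [Jbig]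
        refine Ideal.span_le.mpr ?_
        rintro g hg
        simp only [Set.mem_insert_iff, Set.mem_singleton_iff] at hg
        have hs := hSSeval (![1, 1, (n : K) ^ 2]) (by simp) (by simp)
        rcases hg with rfl | rfl | rfl | rfl | rfl <;>
          simp [RingHom.mem_ker, hs, sub_eq_zero]
        ring
      exact RingHom.mem_ker.mp (hle hp)
    obtain ⟨q, c, hnf⟩ := normal_form n K f
    have hzero : ∀ x ∈ MvPolynomial.zeroLocus K (Jbig n K),
        MvPolynomial.eval x (MvPolynomial.rename Fin.castSucc q
          + MvPolynomial.C c * MvPolynomial.X 2) = 0 := by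
      intro x hx
      have h1 := hvan x hx
      have h2 := hx _ hnf
      rw [map_sub] at h2
      rw [h1, zero_sub, neg_eq_zero] at h2
      exact h2
    have hq : ∀ y : Fin 2 → K, (y 0) ^ n = 1 → (y 1) ^ n = 1 →
        MvPolynomial.eval y q = 0 := by
      intro y hy0 hy1
      have hx := hzero ![y 0, y 1, 0]
        (hptA _ (by simpa using hy0) (by simpa using hy1) (by simp))
      rw [map_add, map_mul, MvPolynomial.eval_rename] at hx
      have hcomp : ((![y 0, y 1, 0] : Fin 3 → K) ∘ Fin.castSucc) = y := by
        funext i; fin_cases i <;> rfl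
      rw [hcomp] at hx
      simpa using hx
    have hc : c = 0 := by
      have hx := hzero _ hptB
      rw [map_add, map_mul, MvPolynomial.eval_rename] at hx
      have hq11 : MvPolynomial.eval ((![1, 1, (n : K) ^ 2] : Fin 3 → K) ∘ Fin.castSucc) q = 0 := by
        apply hq
        · simp [Function.comp]
        · simp [Function.comp]
      rw [hq11, MvPolynomial.eval_C, MvPolynomial.eval_X] at hx
      have hx2 : (![1, 1, (n : K) ^ 2] : Fin 3 → K) 2 = (n : K) ^ 2 := by simp
      rw [hx2] at hx
      have hn2 : ((n : K) ^ 2) ≠ 0 := pow_ne_zero _ hK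
      rw [zero_add] at hx
      exact (mul_eq_zero.mp hx).resolve_right hn2
    obtain ⟨u, v, huv⟩ := biv_mem n hn0 K hK q hq
    have hrq : MvPolynomial.rename Fin.castSucc q ∈ Jbig n K := by
      rw [huv]
      simp only [map_add, map_mul, map_sub, map_pow, map_one, MvPolynomial.rename_X,
        Fin.castSucc_zero, Fin.castSucc_one]
      exact Ideal.add_mem _ (Ideal.mul_mem_right _ _ (mJ1 n K)) (Ideal.mul_mem_right _ _ (mJ2 n K))
    have hf : f ∈ Jbig n K := by
      rw [hc] at hnf
      have hrw : f = (f - (MvPolynomial.rename Fin.castSucc q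
          + MvPolynomial.C (0 : K) * MvPolynomial.X 2)) + MvPolynomial.rename Fin.castSucc q := by
        rw [map_zero]; ring
      rw [hrw]
      exact Ideal.add_mem _ hnf hrq
    -- map down to the quotient
    have hgen : ∀ g ∈ ({ MvPolynomial.X 0 ^ n - 1, MvPolynomial.X 1 ^ n - 1,
        MvPolynomial.X 2 ^ 2 - SS n K * MvPolynomial.X 2,
        (1 - MvPolynomial.X 0) * MvPolynomial.X 2, (1 - MvPolynomial.X 1) * MvPolynomial.X 2 } :
          Set (MvPolynomial (Fin 3) K)),
        Ideal.Quotient.mk I g ∈ Ideal.span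
          { Ideal.Quotient.mk I ((1 - MvPolynomial.X 0) * MvPolynomial.X 2),
            Ideal.Quotient.mk I ((1 - MvPolynomial.X 1) * MvPolynomial.X 2) } := by
      rintro g hg
      simp only [Set.mem_insert_iff, Set.mem_singleton_iff] at hg
      have z1 : Ideal.Quotient.mk I (MvPolynomial.X 0 ^ n - 1) = 0 := by
        rw [Ideal.Quotient.eq_zero_iff_mem, hIS]; exact Ideal.subset_span (by simp)
      have z2 : Ideal.Quotient.mk I (MvPolynomial.X 1 ^ n - 1) = 0 := by
        rw [Ideal.Quotient.eq_zero_iff_mem, hIS]; exact Ideal.subset_span (by simp)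
      have z3 : Ideal.Quotient.mk I (MvPolynomial.X 2 ^ 2 - SS n K * MvPolynomial.X 2) = 0 := by
        rw [Ideal.Quotient.eq_zero_iff_mem, hIS]; exact Ideal.subset_span (by simp)
      rcases hg with rfl | rfl | rfl | rfl | rfl
      · rw [z1]; exact Ideal.zero_mem _
      · rw [z2]; exact Ideal.zero_mem _
      · rw [z3]; exact Ideal.zero_mem _
      · exact Ideal.subset_span (Set.mem_insert _ _)
      · exact Ideal.subset_span (Set.mem_insert_of_mem _ rfl)
    rw [Jbig] at hf
    clear hα hk hfrad hvan hnf hzero hq hc huv hrq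
    induction hf using Submodule.span_induction with
    | mem g hg => exact hgen g hg
    | zero => rw [RingHom.map_zero]; exact Ideal.zero_mem _
    | add a b _ _ ha hb => rw [RingHom.map_add]; exact Ideal.add_mem _ ha hb
    | smul r a _ ha =>
      show Ideal.Quotient.mk I (r * a) ∈ _
      have hma : Ideal.Quotient.mk I (r * a)
          = Ideal.Quotient.mk I r * Ideal.Quotient.mk I a := RingHom.map_mul _ _ _
      rw [hma]; exact Ideal.mul_mem_left _ _ ha
  · -- easy direction: generators are nilpotent
    rw [Ideal.span_le]
    rintro x hx
    simp only [Set.mem_insert_iff, Set.mem_singleton_iff] at hx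
    rcases hx with rfl | rfl
    · refine Ideal.mem_radical_iff.mpr ⟨2, ?_⟩
      rw [Ideal.mem_bot, ← map_pow, Ideal.Quotient.eq_zero_iff_mem, hIS]
      exact g4sq n K
    · refine Ideal.mem_radical_iff.mpr ⟨2, ?_⟩
      rw [Ideal.mem_bot, ← map_pow, Ideal.Quotient.eq_zero_iff_mem, hIS]
      exact g5sq n K
end

section
/- Let K be an algebraically closed field with char K ∤ n, n ≥ 3, and let A = K[x,y,z]/(x^n - 1, y^n - 1, z² - n·(Σ_{i=0}^{n-1} x^i)·z). Then the Jacobson radical of A is the ideal generated by (1-x̄)·z̄, where x̄, z̄ denote the images of x, z in A. -/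
open MvPolynomial Finset

section helpers

variable {R : Type*} [CommRing R]

private lemma split2 {A : Ideal R} {f g : R} (hfg : f * g ∈ A) (h : IsCoprime f g) :
    A = (A ⊔ Ideal.span {f}) ⊓ (A ⊔ Ideal.span {g}) := by
  refine le_antisymm (le_inf le_sup_left le_sup_left) fun p hp => ?_
  obtain ⟨hp1, hp2⟩ := hp
  obtain ⟨u, v, huv⟩ := h
  obtain ⟨c, hc, d, hd, hcd⟩ := Submodule.mem_sup.mp hp1
  obtain ⟨a, ha, b, hb, hab⟩ := Submodule.mem_sup.mp hp2
  obtain ⟨d', rfl⟩ := Ideal.mem_span_singleton'.mp hd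
  obtain ⟨b', rfl⟩ := Ideal.mem_span_singleton'.mp hb
  have h1 : f * p ∈ A := by
    have hfp : f * p = f * a + b' * (f * g) := by rw [← hab]; ring
    rw [hfp]
    exact A.add_mem (A.mul_mem_left _ ha) (A.mul_mem_left _ hfg)
  have h2 : g * p ∈ A := by
    have hgp : g * p = g * c + d' * (f * g) := by rw [← hcd]; ring
    rw [hgp]
    exact A.add_mem (A.mul_mem_left _ hc) (A.mul_mem_left _ hfg)
  have hp' : p = u * (f * p) + v * (g * p) := by linear_combination (-p) * huv
  rw [hp']
  exact A.add_mem (A.mul_mem_left _ h1) (A.mul_mem_left _ h2)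

private lemma splitFinset {ι : Type*} [DecidableEq ι] {f : ι → R} (s : Finset ι) :
    ∀ A : Ideal R, (↑s : Set ι).Pairwise (Function.onFun IsCoprime f) →
      (∏ i ∈ s, f i) ∈ A → A = ⨅ i ∈ s, (A ⊔ Ideal.span {f i}) := by
  induction s using Finset.induction_on with
  | empty =>
    intro A _ hprod
    simp only [Finset.prod_empty] at hprod
    rw [(Ideal.eq_top_iff_one A).mpr hprod]
    simp
  | @insert a s ha ih =>
    intro A hpw hprod
    have hcop : IsCoprime (f a) (∏ i ∈ s, f i) :=
      IsCoprime.prod_right fun i hi =>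
        hpw (by simp) (by simp [hi]) (by rintro rfl; exact ha hi)
    rw [Finset.prod_insert ha] at hprod
    have e1 := split2 hprod hcop
    have e2 := ih (A ⊔ Ideal.span {∏ i ∈ s, f i})
      (hpw.mono (Finset.coe_subset.mpr (Finset.subset_insert a s)))
      (Ideal.mem_sup_right (Ideal.subset_span rfl))
    have e3 : ∀ i ∈ s,
        A ⊔ Ideal.span {∏ j ∈ s, f j} ⊔ Ideal.span {f i} = A ⊔ Ideal.span {f i} := by
      intro i hi
      rw [sup_assoc, sup_eq_right.mpr
        (Ideal.span_singleton_le_span_singleton.mpr (Finset.dvd_prod_of_mem f hi))]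
    calc A = (A ⊔ Ideal.span {f a}) ⊓ (A ⊔ Ideal.span {∏ i ∈ s, f i}) := e1
      _ = (A ⊔ Ideal.span {f a}) ⊓
          ⨅ i ∈ s, (A ⊔ Ideal.span {∏ j ∈ s, f j} ⊔ Ideal.span {f i}) := by rw [← e2]
      _ = (A ⊔ Ideal.span {f a}) ⊓ ⨅ i ∈ s, (A ⊔ Ideal.span {f i}) := by
          congr 1
          exact iInf_congr fun i => iInf_congr fun hi => e3 i hi
      _ = ⨅ i ∈ insert a s, (A ⊔ Ideal.span {f i}) := by
          rw [Finset.iInf_insert]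

private lemma sub_C_eval_mem {S : Type*} [CommRing S] (pt : Fin 3 → S)
    (p : MvPolynomial (Fin 3) S) :
    p - C (eval pt p) ∈
      Ideal.span ({X 0 - C (pt 0), X 1 - C (pt 1), X 2 - C (pt 2)} :
        Set (MvPolynomial (Fin 3) S)) := by
  set M := Ideal.span ({X 0 - C (pt 0), X 1 - C (pt 1), X 2 - C (pt 2)} :
    Set (MvPolynomial (Fin 3) S)) with hM
  induction p using MvPolynomial.induction_on with
  | C a => simp
  | add p q hp hq =>
    have hd : p + q - C (eval pt (p + q)) =
        (p - C (eval pt p)) + (q - C (eval pt q)) := by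
      rw [map_add, C_add]; ring
    rw [hd]
    exact M.add_mem hp hq
  | mul_X p i hp =>
    have hX : X i - C (pt i) ∈ M := by
      fin_cases i <;> exact Ideal.subset_span (by simp)
    have hd : p * X i - C (eval pt (p * X i)) =
        (p - C (eval pt p)) * (X i - C (pt i)) + C (eval pt p) * (X i - C (pt i))
          + C (pt i) * (p - C (eval pt p)) := by
      rw [eval_mul, eval_X, C_mul]; ring
    rw [hd]
    exact M.add_mem (M.add_mem (Ideal.mul_mem_right _ _ hp) (Ideal.mul_mem_left _ _ hX))
      (Ideal.mul_mem_left _ _ hp)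

private lemma leaf_eq {K : Type*} [Field K] {A : Ideal (MvPolynomial (Fin 3) K)}
    {pt : Fin 3 → K} (hle : A ≤ vanishingIdeal K {pt})
    (h0 : X 0 - C (pt 0) ∈ A) (h1 : X 1 - C (pt 1) ∈ A) (h2 : X 2 - C (pt 2) ∈ A) :
    A = vanishingIdeal K {pt} := by
  refine le_antisymm hle fun p hp => ?_
  have hmem := sub_C_eval_mem pt p
  rw [(by simpa [coe_aeval_eq_eval] using (mem_vanishingIdeal_singleton_iff pt p).mp hp :
    eval pt p = 0), map_zero, sub_zero] at hmem
  refine Ideal.span_le.mpr ?_ hmem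
  rintro q hq
  simp only [Set.mem_insert_iff, Set.mem_singleton_iff] at hq
  rcases hq with rfl | rfl | rfl <;> assumption

end helpers

set_option maxHeartbeats 1000000 in
/-- The Jacobson radical of the projective class algebra
`A = K[x,y,z]/(xⁿ-1, yⁿ-1, z² - n(Σ xⁱ)z)` of `H_n(0,q)` is generated by `(1-x̄)z̄`. -/
theorem stmt_12 (n : ℕ) (hn : 3 ≤ n) (K : Type*) [Field K] [IsAlgClosed K]
    (hchar : ¬ (ringChar K ∣ n))
    (I : Ideal (MvPolynomial (Fin 3) K))
    (hI : I = Ideal.span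
      { X 0 ^ n - 1, X 1 ^ n - 1,
        X 2 ^ 2 - (n : MvPolynomial (Fin 3) K) * (∑ i ∈ range n, X 0 ^ i) * X 2 }) :
    (⊥ : Ideal (MvPolynomial (Fin 3) K ⧸ I)).jacobson =
      Ideal.span { Ideal.Quotient.mk I ((1 - X 0) * X 2) } := by
  classical
  have hn0 : 0 < n := by omega
  have hnK : (n : K) ≠ 0 := fun h => hchar ((CharP.cast_eq_zero_iff K (ringChar K) n).mp h)
  haveI : NeZero ((n : K)) := ⟨hnK⟩
  obtain ⟨ζ₀, hζ₀⟩ := HasEnoughRootsOfUnity.exists_primitiveRoot K n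
  -- generators of I
  have hg1 : (X 0 : MvPolynomial (Fin 3) K) ^ n - 1 ∈ I := by
    rw [hI]; exact Ideal.subset_span (by simp)
  have hg2 : (X 1 : MvPolynomial (Fin 3) K) ^ n - 1 ∈ I := by
    rw [hI]; exact Ideal.subset_span (by simp)
  have hg3 : (X 2 : MvPolynomial (Fin 3) K) ^ 2
      - (n : MvPolynomial (Fin 3) K) * (∑ i ∈ range n, X 0 ^ i) * X 2 ∈ I := by
    rw [hI]; exact Ideal.subset_span (by simp)
  have hgeom : ((1 : MvPolynomial (Fin 3) K) - X 0) * (∑ i ∈ range n, X 0 ^ i)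
      = 1 - X 0 ^ n := by
    linear_combination -(geom_sum_mul (X 0 : MvPolynomial (Fin 3) K) n)
  -- t'² ∈ I
  have htsq : ((1 - X 0) * X 2 : MvPolynomial (Fin 3) K) * ((1 - X 0) * X 2) ∈ I := by
    have hid : ((1 - X 0) * X 2 : MvPolynomial (Fin 3) K) * ((1 - X 0) * X 2) =
        (1 - X 0) ^ 2 * (X 2 ^ 2
          - (n : MvPolynomial (Fin 3) K) * (∑ i ∈ range n, X 0 ^ i) * X 2)
        + (-((n : MvPolynomial (Fin 3) K) * (1 - X 0) * X 2)) * (X 0 ^ n - 1) := by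
      linear_combination ((n : MvPolynomial (Fin 3) K) * (1 - X 0) * X 2) * hgeom
    rw [hid]
    exact I.add_mem (I.mul_mem_left _ hg3) (I.mul_mem_left _ hg1)
  set I' := I ⊔ Ideal.span {((1 - X 0) * X 2 : MvPolynomial (Fin 3) K)} with hI'def
  -- product decomposition of Xⱼⁿ - 1
  have hprod : ∀ j : Fin 3, (X j : MvPolynomial (Fin 3) K) ^ n - 1
      = ∏ ζ ∈ Polynomial.nthRootsFinset n (1 : K), (X j - C ζ) := by
    intro j
    have h2 := congrArg (Polynomial.aeval (X j : MvPolynomial (Fin 3) K))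
      (Polynomial.X_pow_sub_one_eq_prod hn0 hζ₀)
    simpa [map_prod, Polynomial.aeval_X, Polynomial.aeval_C, algebraMap_eq] using h2
  have hcop : ∀ j : Fin 3, (↑(Polynomial.nthRootsFinset n (1 : K)) : Set K).Pairwise
      (Function.onFun IsCoprime fun ζ => (X j : MvPolynomial (Fin 3) K) - C ζ) := by
    intro j ζ hζ ζ' hζ' hne
    have hs : ζ' - ζ ≠ 0 := sub_ne_zero.mpr (Ne.symm hne)
    refine ⟨C (ζ' - ζ)⁻¹, -C (ζ' - ζ)⁻¹, ?_⟩
    have hc : (C ((ζ' - ζ)⁻¹) : MvPolynomial (Fin 3) K) * (X j - C ζ)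
        + (-C ((ζ' - ζ)⁻¹)) * (X j - C ζ') = C ((ζ' - ζ)⁻¹ * (ζ' - ζ)) := by
      rw [C_mul, C_sub]; ring
    rw [hc, inv_mul_cancel₀ hs, C_1]
  have hroot : ∀ ζ ∈ Polynomial.nthRootsFinset n (1 : K), ζ ^ n = 1 :=
    fun ζ h => (Polynomial.mem_nthRootsFinset hn0 (1 : K)).mp h
  -- I' is contained in the vanishing ideal of the relevant points
  have hI'le : ∀ ζ η c : K, ζ ^ n = 1 → η ^ n = 1 →
      (c = 0 ∨ (ζ = 1 ∧ c = (n : K) * n)) →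
      I' ≤ vanishingIdeal K {![ζ, η, c]} := by
    intro ζ η c hζ hη hc
    refine sup_le ?_ ?_
    · rw [hI, Ideal.span_le]
      rintro q hq
      simp only [Set.mem_insert_iff, Set.mem_singleton_iff] at hq
      rcases hq with rfl | rfl | rfl <;>
        rw [SetLike.mem_coe, mem_vanishingIdeal_singleton_iff]
      · simp [hζ]
      · simp [hη]
      · rcases hc with rfl | ⟨rfl, rfl⟩
        · simp
        · simp only [coe_aeval_eq_eval, map_sub, map_mul, map_pow, eval_X, aeval_X, map_natCast, map_sum]
          simp only [Matrix.cons_val_zero, Matrix.cons_val_one, Matrix.head_cons,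
            Matrix.cons_val_two, Matrix.tail_cons, one_pow, Finset.sum_const,
            Finset.card_range, nsmul_eq_mul, mul_one]
          ring
    · rw [Ideal.span_le]
      rintro q hq
      rw [Set.mem_singleton_iff] at hq
      subst hq
      rw [SetLike.mem_coe, mem_vanishingIdeal_singleton_iff]
      rcases hc with rfl | ⟨rfl, _⟩ <;> simp
  -- the leaves with ζ ≠ 1
  have claimA : ∀ ζ ∈ Polynomial.nthRootsFinset n (1 : K), ∀ η ∈ Polynomial.nthRootsFinset n (1 : K),
      ζ ≠ 1 →
      I' ⊔ Ideal.span {X 0 - C ζ} ⊔ Ideal.span {X 1 - C η}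
        = vanishingIdeal K {![ζ, η, (0 : K)]} := by
    intro ζ hζ η hη hζ1
    have hpt0 : (![ζ, η, (0 : K)]) 0 = ζ := rfl
    have hpt1 : (![ζ, η, (0 : K)]) 1 = η := rfl
    have hpt2 : (![ζ, η, (0 : K)]) 2 = 0 := rfl
    refine leaf_eq ?_ ?_ ?_ ?_
    · refine sup_le (sup_le (hI'le ζ η 0 (hroot ζ hζ) (hroot η hη) (Or.inl rfl)) ?_) ?_ <;>
        · rw [Ideal.span_le]
          rintro q hq
          rw [Set.mem_singleton_iff] at hq
          subst hq
          rw [SetLike.mem_coe, mem_vanishingIdeal_singleton_iff]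
          simp
    · rw [hpt0]
      exact Ideal.mem_sup_left (Ideal.mem_sup_right (Ideal.subset_span rfl))
    · rw [hpt1]
      exact Ideal.mem_sup_right (Ideal.subset_span rfl)
    · rw [hpt2, map_zero, sub_zero]
      have h1ζ : (1 : K) - ζ ≠ 0 := sub_ne_zero.mpr (Ne.symm hζ1)
      have ht'A : ((1 - X 0) * X 2 : MvPolynomial (Fin 3) K)
          ∈ I' ⊔ Ideal.span {X 0 - C ζ} ⊔ Ideal.span {X 1 - C η} :=
        Ideal.mem_sup_left (Ideal.mem_sup_left (Ideal.mem_sup_right (Ideal.subset_span rfl)))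
      have hxA : (X 0 - C ζ : MvPolynomial (Fin 3) K)
          ∈ I' ⊔ Ideal.span {X 0 - C ζ} ⊔ Ideal.span {X 1 - C η} :=
        Ideal.mem_sup_left (Ideal.mem_sup_right (Ideal.subset_span rfl))
      have hz : (X 2 : MvPolynomial (Fin 3) K)
          = C ((1 - ζ)⁻¹) * ((1 - X 0) * X 2 + (X 0 - C ζ) * X 2) := by
        rw [show ((1 : MvPolynomial (Fin 3) K) - X 0) * X 2 + (X 0 - C ζ) * X 2
            = C (1 - ζ) * X 2 by rw [C_sub, C_1]; ring,
          ← mul_assoc, ← C_mul, inv_mul_cancel₀ h1ζ, C_1, one_mul]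
      rw [hz]
      exact Ideal.mul_mem_left _ _
        (Ideal.add_mem _ ht'A (Ideal.mul_mem_right _ _ hxA))
  -- the leaves with ζ = 1
  have claimB : ∀ η ∈ Polynomial.nthRootsFinset n (1 : K),
      I' ⊔ Ideal.span {X 0 - C (1 : K)} ⊔ Ideal.span {X 1 - C η}
        = vanishingIdeal K {![(1 : K), η, (0 : K)]}
          ⊓ vanishingIdeal K {![(1 : K), η, ((n : K) * n)]} := by
    intro η hη
    set B := I' ⊔ Ideal.span {X 0 - C (1 : K)} ⊔ Ideal.span {(X 1 : MvPolynomial (Fin 3) K) - C η}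
      with hB
    have hCn : (C ((n : K) * n) : MvPolynomial (Fin 3) K)
        = (n : MvPolynomial (Fin 3) K) * n := by
      rw [C_mul, map_natCast]
    have hen : (∑ i ∈ range n, (X 0 : MvPolynomial (Fin 3) K) ^ i)
        - (n : MvPolynomial (Fin 3) K) ∈ Ideal.span {X 0 - C (1 : K)} := by
      have hsum : (∑ i ∈ range n, (X 0 : MvPolynomial (Fin 3) K) ^ i)
          - (n : MvPolynomial (Fin 3) K) = ∑ i ∈ range n, ((X 0) ^ i - 1) := by
        rw [Finset.sum_sub_distrib]
        simp
      rw [hsum]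
      refine Ideal.sum_mem _ fun i _ => Ideal.mem_span_singleton.mpr ?_
      rw [C_1]
      simpa using sub_dvd_pow_sub_pow (X 0 : MvPolynomial (Fin 3) K) 1 i
    have hfg : (X 2 : MvPolynomial (Fin 3) K) * (X 2 - C ((n : K) * n)) ∈ B := by
      have hid : (X 2 : MvPolynomial (Fin 3) K) * (X 2 - C ((n : K) * n))
          = (X 2 ^ 2 - (n : MvPolynomial (Fin 3) K) * (∑ i ∈ range n, X 0 ^ i) * X 2)
            + ((n : MvPolynomial (Fin 3) K) * X 2)
              * ((∑ i ∈ range n, X 0 ^ i) - (n : MvPolynomial (Fin 3) K)) := by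
        rw [hCn]; ring
      rw [hid]
      refine B.add_mem ?_ ?_
      · exact Ideal.mem_sup_left (Ideal.mem_sup_left (Ideal.mem_sup_left hg3))
      · exact Ideal.mem_sup_left (Ideal.mem_sup_right (Ideal.mul_mem_left _ _ hen))
    have hnn : (n : K) * n ≠ 0 := mul_ne_zero hnK hnK
    have hcop2 : IsCoprime (X 2 : MvPolynomial (Fin 3) K) (X 2 - C ((n : K) * n)) := by
      refine ⟨C (((n : K) * n)⁻¹), -C (((n : K) * n)⁻¹), ?_⟩
      have hc : (C (((n : K) * n)⁻¹) : MvPolynomial (Fin 3) K) * X 2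
          + (-C (((n : K) * n)⁻¹)) * (X 2 - C ((n : K) * n))
          = C (((n : K) * n)⁻¹ * ((n : K) * n)) := by
        rw [C_mul (a := ((n : K) * n)⁻¹) (a' := (n : K) * n)]; ring
      rw [hc, inv_mul_cancel₀ hnn, C_1]
    rw [split2 hfg hcop2]
    congr 1
    · refine leaf_eq ?_ ?_ ?_ ?_
      · refine sup_le ?_ ?_
        · rw [hB]
          refine sup_le (sup_le
            (hI'le 1 η 0 (one_pow n) (hroot η hη) (Or.inl rfl)) ?_) ?_ <;>
            · rw [Ideal.span_le]
              rintro q hq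
              rw [Set.mem_singleton_iff] at hq
              subst hq
              rw [SetLike.mem_coe, mem_vanishingIdeal_singleton_iff]
              simp
        · rw [Ideal.span_le]
          rintro q hq
          rw [Set.mem_singleton_iff] at hq
          subst hq
          rw [SetLike.mem_coe, mem_vanishingIdeal_singleton_iff]
          simp
      · exact Ideal.mem_sup_left
          (Ideal.mem_sup_left (Ideal.mem_sup_right (Ideal.subset_span rfl)))
      · exact Ideal.mem_sup_left (Ideal.mem_sup_right (Ideal.subset_span rfl))
      · show (X 2 : MvPolynomial (Fin 3) K) - C 0 ∈ _
        rw [map_zero, sub_zero]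
        exact Ideal.mem_sup_right (Ideal.subset_span rfl)
    · refine leaf_eq ?_ ?_ ?_ ?_
      · refine sup_le ?_ ?_
        · rw [hB]
          refine sup_le (sup_le
            (hI'le 1 η ((n : K) * n) (one_pow n) (hroot η hη) (Or.inr ⟨rfl, rfl⟩)) ?_) ?_ <;>
            · rw [Ideal.span_le]
              rintro q hq
              rw [Set.mem_singleton_iff] at hq
              subst hq
              rw [SetLike.mem_coe, mem_vanishingIdeal_singleton_iff]
              simp
        · rw [Ideal.span_le]
          rintro q hq
          rw [Set.mem_singleton_iff] at hq
          subst hq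
          rw [SetLike.mem_coe, mem_vanishingIdeal_singleton_iff]
          simp
      · exact Ideal.mem_sup_left
          (Ideal.mem_sup_left (Ideal.mem_sup_right (Ideal.subset_span rfl)))
      · exact Ideal.mem_sup_left (Ideal.mem_sup_right (Ideal.subset_span rfl))
      · exact Ideal.mem_sup_right (Ideal.subset_span rfl)
  -- the radical of I' is I'
  have hI'rad : I'.radical = I' := by
    refine le_antisymm ?_ Ideal.le_radical
    have hstep1 : I' = ⨅ ζ ∈ Polynomial.nthRootsFinset n (1 : K),
        (I' ⊔ Ideal.span {X 0 - C ζ}) := by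
      refine splitFinset _ _ (hcop 0) ?_
      rw [← hprod 0]
      exact Ideal.mem_sup_left hg1
    calc I'.radical
        ≤ ⨅ ζ ∈ Polynomial.nthRootsFinset n (1 : K), (I' ⊔ Ideal.span {X 0 - C ζ}) := ?_
      _ = I' := hstep1.symm
    refine le_iInf fun ζ => le_iInf fun hζ => ?_
    refine (Ideal.radical_mono (le_sup_left :
      I' ≤ I' ⊔ Ideal.span {X 0 - C ζ})).trans ?_
    have hstep2 : I' ⊔ Ideal.span {X 0 - C ζ} = ⨅ η ∈ Polynomial.nthRootsFinset n (1 : K),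
        (I' ⊔ Ideal.span {X 0 - C ζ} ⊔ Ideal.span {X 1 - C η}) := by
      refine splitFinset _ _ (hcop 1) ?_
      rw [← hprod 1]
      exact Ideal.mem_sup_left (Ideal.mem_sup_left hg2)
    calc (I' ⊔ Ideal.span {X 0 - C ζ}).radical
        ≤ ⨅ η ∈ Polynomial.nthRootsFinset n (1 : K),
            (I' ⊔ Ideal.span {X 0 - C ζ} ⊔ Ideal.span {X 1 - C η}) := ?_
      _ = I' ⊔ Ideal.span {X 0 - C ζ} := hstep2.symm
    refine le_iInf fun η => le_iInf fun hη => ?_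
    refine (Ideal.radical_mono (le_sup_left :
      _ ≤ I' ⊔ Ideal.span {X 0 - C ζ} ⊔ Ideal.span {X 1 - C η})).trans ?_
    by_cases hζ1 : ζ = 1
    · subst hζ1
      rw [claimB η hη]
      refine le_inf ((Ideal.radical_mono inf_le_left).trans ?_)
        ((Ideal.radical_mono inf_le_right).trans ?_) <;>
        exact le_of_eq (Ideal.IsPrime.radical
          (inferInstance))
    · rw [claimA ζ hζ η hη hζ1]
      exact le_of_eq (Ideal.IsPrime.radical (inferInstance))
  -- transfer to the quotient
  have hTmap : Ideal.span {Ideal.Quotient.mk I ((1 - X 0) * X 2)}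
      = Ideal.map (Ideal.Quotient.mk I)
          (Ideal.span {((1 - X 0) * X 2 : MvPolynomial (Fin 3) K)}) := by
    rw [Ideal.map_span, Set.image_singleton]
  have hcomap : Ideal.comap (Ideal.Quotient.mk I)
      (Ideal.span {Ideal.Quotient.mk I ((1 - X 0) * X 2)}) = I' := by
    rw [hTmap, Ideal.comap_map_of_surjective _ Ideal.Quotient.mk_surjective,
      ← RingHom.ker_eq_comap_bot, Ideal.mk_ker, sup_comm]
  have hTrad : (Ideal.span {Ideal.Quotient.mk I ((1 - X 0) * X 2)}).radical
      = Ideal.span {Ideal.Quotient.mk I ((1 - X 0) * X 2)} := by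
    apply Ideal.comap_injective_of_surjective _ Ideal.Quotient.mk_surjective
    rw [Ideal.comap_radical, hcomap, hI'rad]
  have hbotrad : (⊥ : Ideal (MvPolynomial (Fin 3) K ⧸ I)).radical
      = Ideal.span {Ideal.Quotient.mk I ((1 - X 0) * X 2)} := by
    refine le_antisymm ((Ideal.radical_mono bot_le).trans hTrad.le) ?_
    rw [Ideal.span_le]
    rintro q hq
    rw [Set.mem_singleton_iff] at hq
    subst hq
    refine ⟨2, ?_⟩
    rw [Ideal.mem_bot, pow_two, ← map_mul, Ideal.Quotient.eq_zero_iff_mem]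
    exact htsq
  rw [← Ideal.radical_eq_jacobson, hbotrad]
end

section
/- In the polynomial ring ℚ[x,y], for every n ≥ 3 the identity Σ_{i=0}^{⌊(n-1)/2⌋} (-1)^i ((n-1)/(n-1-i))·C(n-1-i,i)·x^i·y^{n-2i} − Σ_{i=1}^{⌊n/2⌋} (-1)^{i-1} ((n-2)/(n-1-i))·C(n-1-i,i-1)·x^i·y^{n-2i} − 2 = Σ_{i=0}^{⌊n/2⌋} (-1)^i (n/(n-i))·C(n-i,i)·x^i·y^{n-2i} − 2 holds, where C denotes the binomial coefficient. -/
open MvPolynomial Finset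

lemma split0' {M : Type*} [AddCommMonoid M] (m : ℕ) (f : ℕ → M) :
    ∑ i ∈ range (m+1), f i = f 0 + ∑ i ∈ Icc 1 m, f i := by
  have h1 : range (m+1) = Icc 0 m := by ext x; simp
  have h2 : (Icc 0 m).erase 0 = Icc 1 m := by ext x; simp; omega
  rw [h1, ← Finset.add_sum_erase _ f (by simp : (0:ℕ) ∈ Icc 0 m), h2]

lemma key' (n i : ℕ) (hn : 3 ≤ n) (hi1 : 1 ≤ i) (hi2 : 2*i ≤ n) :
    (-1:ℚ)^i * (((n:ℚ)-1)/((n:ℚ)-1-i)) * (Nat.choose (n-1-i) i : ℚ)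
      - (-1:ℚ)^(i-1) * (((n:ℚ)-2)/((n:ℚ)-1-i)) * (Nat.choose (n-1-i) (i-1) : ℚ)
    = (-1:ℚ)^i * ((n:ℚ)/((n:ℚ)-i)) * (Nat.choose (n-i) i : ℚ) := by
  have hin : i < n := by omega
  have hd1 : ((n:ℚ) - 1 - i) ≠ 0 := by
    have h : i + 1 ≠ n := by omega
    have h' : (i:ℚ) + 1 ≠ (n:ℚ) := by exact_mod_cast fun h2 => h (by exact_mod_cast h2)
    intro h2; apply h'; linarith
  have hd2 : ((n:ℚ) - i) ≠ 0 := by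
    have h : (i:ℚ) ≠ (n:ℚ) := by exact_mod_cast hin.ne
    intro h2; apply h; linarith
  have hsign : (-1:ℚ)^(i-1) = -(-1:ℚ)^i := by
    obtain ⟨j, rfl⟩ := Nat.exists_eq_add_of_le hi1
    simp [pow_succ, pow_add]
  have pascal : (Nat.choose (n-i) i : ℚ)
      = (Nat.choose (n-1-i) i : ℚ) + (Nat.choose (n-1-i) (i-1) : ℚ) := by
    obtain ⟨j, rfl⟩ : ∃ j, i = j + 1 := ⟨i-1, by omega⟩
    have h1 : n - (j+1) = (n-1-(j+1)) + 1 := by omega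
    rw [h1, Nat.choose_succ_succ']
    simp
    ring
  have hrel : (i:ℚ) * (Nat.choose (n-1-i) i : ℚ)
      = ((n:ℚ) - 2*i) * (Nat.choose (n-1-i) (i-1) : ℚ) := by
    have h := Nat.choose_succ_right_eq (n-1-i) (i-1)
    have h2 : i - 1 + 1 = i := by omega
    rw [h2] at h
    have h3 : n - 1 - i - (i-1) = n - 2*i := by omega
    rw [h3] at h
    have h4 := congrArg (Nat.cast : ℕ → ℚ) h
    push_cast [Nat.cast_sub (by omega : 2*i ≤ n)] at h4
    linarith [h4]
  rw [hsign, pascal]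
  field_simp
  linear_combination hrel

/-- The key polynomial identity in the proof of the defining relation of the
projective class ring `r_p(H_n(1,q))`, in `ℚ[x,y]`:
`Σ_{i=0}^{⌊(n-1)/2⌋} (-1)ⁱ ((n-1)/(n-1-i)) C(n-1-i,i) xⁱ y^{n-2i}`
`− Σ_{i=1}^{⌊n/2⌋} (-1)^{i-1} ((n-2)/(n-1-i)) C(n-1-i,i-1) xⁱ y^{n-2i} − 2`
`= Σ_{i=0}^{⌊n/2⌋} (-1)ⁱ (n/(n-i)) C(n-i,i) xⁱ y^{n-2i} − 2`. -/
theorem stmt_15 (n : ℕ) (hn : 3 ≤ n) :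
    (∑ i ∈ range ((n - 1) / 2 + 1),
        C ((-1 : ℚ) ^ i * (((n : ℚ) - 1) / ((n : ℚ) - 1 - i)) * (Nat.choose (n - 1 - i) i : ℚ)) *
          X 0 ^ i * X 1 ^ (n - 2 * i))
      - (∑ i ∈ Icc 1 (n / 2),
        C ((-1 : ℚ) ^ (i - 1) * (((n : ℚ) - 2) / ((n : ℚ) - 1 - i)) *
            (Nat.choose (n - 1 - i) (i - 1) : ℚ)) *
          X 0 ^ i * X 1 ^ (n - 2 * i))
      - 2
    = (∑ i ∈ range (n / 2 + 1),
        C ((-1 : ℚ) ^ i * ((n : ℚ) / ((n : ℚ) - i)) * (Nat.choose (n - i) i : ℚ)) *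
          X 0 ^ i * X 1 ^ (n - 2 * i)) - 2 := by
  rw [sub_left_inj]
  -- extend the first sum's range
  have hA : (∑ i ∈ range ((n - 1) / 2 + 1),
        C ((-1 : ℚ) ^ i * (((n : ℚ) - 1) / ((n : ℚ) - 1 - i)) * (Nat.choose (n - 1 - i) i : ℚ)) *
          X 0 ^ i * X 1 ^ (n - 2 * i))
      = ∑ i ∈ range (n / 2 + 1),
        C ((-1 : ℚ) ^ i * (((n : ℚ) - 1) / ((n : ℚ) - 1 - i)) * (Nat.choose (n - 1 - i) i : ℚ)) *
          X 0 ^ i * X 1 ^ (n - 2 * i) := by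
    apply Finset.sum_subset
    · intro x hx; simp at hx ⊢; omega
    · intro x hx1 hx2
      simp only [mem_range] at hx1 hx2
      have hz : Nat.choose (n - 1 - x) x = 0 := Nat.choose_eq_zero_of_lt (by omega)
      rw [hz]
      simp
  rw [hA, split0' (n/2) (fun i => C ((-1 : ℚ) ^ i * (((n : ℚ) - 1) / ((n : ℚ) - 1 - i)) *
        (Nat.choose (n - 1 - i) i : ℚ)) * X 0 ^ i * X 1 ^ (n - 2 * i)),
    split0' (n/2) (fun i => C ((-1 : ℚ) ^ i * ((n : ℚ) / ((n : ℚ) - i)) *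
        (Nat.choose (n - i) i : ℚ)) * X 0 ^ i * X 1 ^ (n - 2 * i))]
  rw [add_sub_assoc]
  congr 1
  · have hn1 : ((n:ℚ) - 1) ≠ 0 := by
      have h : (1:ℚ) ≠ (n:ℚ) := by exact_mod_cast (by omega : 1 ≠ n)
      intro h2; apply h; linarith
    have hn0 : (n:ℚ) ≠ 0 := by exact_mod_cast (by omega : n ≠ 0)
    congr 2
    push_cast
    rw [sub_zero, sub_zero, div_self hn1, div_self hn0]
    simp
  · rw [← Finset.sum_sub_distrib]
    apply Finset.sum_congr rfl
    intro i hi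
    simp only [mem_Icc] at hi
    rw [← sub_mul, ← sub_mul, ← map_sub, key' n i hn hi.1 (by omega)]
end

section
/- Let n ≥ 3 and let I be the ideal of ℤ[x,y] generated by x^n − 1 and the product (Σ_{i=0}^{⌊n/2⌋} (-1)^i (n/(n-i))·C(n-i,i)·x^i·y^{n-2i} − 2)·(Σ_{i=0}^{⌊(n-1)/2⌋} (-1)^i·C(n-1-i,i)·x^i·y^{n-1-2i}). Then ℤ[x,y]/I is a free ℤ-module of rank n(2n−1) with basis the images of {x^l·y^m : 0 ≤ l ≤ n−1, 0 ≤ m ≤ 2n−2}. -/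
noncomputable section
namespace Stmt16Aux
open Polynomial Finset

/-- generic monicity helper for sums `∑ C (c i) * X ^ d i`. -/
lemma monic_sum_aux {R : Type*} [CommRing R] [Nontrivial R] (s N : ℕ) (c : ℕ → R) (d : ℕ → ℕ)
    (hc0 : c 0 = 1) (hd0 : d 0 = N) (hdle : ∀ i ≤ s, d i ≤ N)
    (hlt : ∀ i, 0 < i → i ≤ s → d i < N) :
    (∑ i ∈ range (s + 1), C (c i) * X ^ d i).Monic ∧
      (∑ i ∈ range (s + 1), C (c i) * X ^ d i).natDegree = N := by
  set p : R[X] := ∑ i ∈ range (s + 1), C (c i) * X ^ d i with hp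
  have hcoeff : p.coeff N = 1 := by
    rw [hp, finset_sum_coeff]
    rw [Finset.sum_eq_single 0]
    · simp [hd0, hc0, coeff_C_mul, coeff_X_pow]
    · intro i hi hi0
      have hiles : i ≤ s := by simpa using Nat.lt_succ_iff.mp (Finset.mem_range.mp hi)
      have : d i < N := hlt i (Nat.pos_of_ne_zero hi0) hiles
      simp [coeff_C_mul, coeff_X_pow, (Nat.ne_of_lt this).symm]
    · intro h; exact absurd (Finset.mem_range.mpr (Nat.succ_pos s)) h
  have hdeg : p.natDegree ≤ N := by
    refine (natDegree_sum_le _ _).trans ?_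
    rw [Finset.fold_max_le]
    refine ⟨Nat.zero_le _, ?_⟩
    intro i hi
    refine (natDegree_mul_le).trans ?_
    simp only [natDegree_C, natDegree_X_pow, zero_add]
    exact hdle i (Nat.lt_succ_iff.mp (Finset.mem_range.mp hi))
  refine ⟨monic_of_natDegree_le_of_coeff_eq_one N hdeg hcoeff, ?_⟩
  exact le_antisymm hdeg (le_natDegree_of_ne_zero (by rw [hcoeff]; exact one_ne_zero))

variable (n : ℕ)

def gP : ℤ[X] := X ^ n - 1

def wP : (ℤ[X])[X] :=
  ∑ i ∈ range (n / 2 + 1),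
    C (C ((-1 : ℤ) ^ i * ((n * Nat.choose (n - i) i / (n - i) : ℕ) : ℤ)) * X ^ i) *
      X ^ (n - 2 * i)

def vP : (ℤ[X])[X] :=
  ∑ i ∈ range ((n - 1) / 2 + 1),
    C (C ((-1 : ℤ) ^ i * (Nat.choose (n - 1 - i) i : ℤ)) * X ^ i) * X ^ (n - 1 - 2 * i)

def fP : (ℤ[X])[X] := (wP n - 2) * vP n

variable {n} (hn : 3 ≤ n)
include hn

lemma monic_gP : (gP n).Monic := by
  have := Polynomial.monic_X_pow_sub_C (1 : ℤ) (n := n) (by omega)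
  simpa [gP] using this

lemma natDegree_gP : (gP n).natDegree = n := by
  have : gP n = X ^ n - Polynomial.C 1 := by simp [gP]
  rw [this, natDegree_X_pow_sub_C]

lemma monic_wP : (wP n).Monic ∧ (wP n).natDegree = n := by
  refine monic_sum_aux (n / 2) n _ (fun i => n - 2 * i) ?_ (by omega)
    (fun i hi => by omega) (fun i hi his => by omega)
  have h0 : n * Nat.choose (n - 0) 0 / (n - 0) = 1 := by
    rw [Nat.sub_zero, Nat.choose_zero_right, mul_one, Nat.div_self (by omega)]
  rw [h0]
  norm_num

lemma monic_vP : (vP n).Monic ∧ (vP n).natDegree = n - 1 := by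
  refine monic_sum_aux ((n - 1) / 2) (n - 1) _ (fun i => n - 1 - 2 * i) ?_
    (by omega) (fun i hi => by omega)
    (fun i hi his => by omega)
  norm_num

lemma monic_fP : (fP n).Monic ∧ (fP n).natDegree = 2 * n - 1 := by
  obtain ⟨hw, hwd⟩ := monic_wP hn
  obtain ⟨hv, hvd⟩ := monic_vP hn
  have hwc := hw.coeff_natDegree
  rw [hwd] at hwc
  have h2 : (wP n - 2).coeff n = 1 := by
    have h20 : ((2 : (ℤ[X])[X])).coeff n = 0 := by
      rw [show (2 : (ℤ[X])[X]) = C 2 from (map_ofNat C 2).symm, coeff_C, if_neg (by omega)]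
    rw [coeff_sub, h20, sub_zero, hwc]
  have hdle : (wP n - 2).natDegree ≤ n := by
    refine (natDegree_sub_le _ _).trans ?_
    rw [hwd]
    rw [show ((2 : (ℤ[X])[X])).natDegree = 0 from natDegree_ofNat 2]
    omega
  have hw2 : (wP n - 2).Monic := monic_of_natDegree_le_of_coeff_eq_one n hdle h2
  have hw2d : (wP n - 2).natDegree = n :=
    le_antisymm hdle (le_natDegree_of_ne_zero (by rw [h2]; exact one_ne_zero))
  refine ⟨hw2.mul hv, ?_⟩
  rw [fP, hw2.natDegree_mul hv, hw2d, hvd]; omega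

end Stmt16Aux


namespace Stmt16AuxE
open Polynomial Finset

def ε : MvPolynomial (Fin 1) ℤ ≃ₐ[ℤ] ℤ[X] :=
  (MvPolynomial.finSuccEquiv ℤ 0).trans
    (Polynomial.mapAlgEquiv (MvPolynomial.isEmptyAlgEquiv ℤ (Fin 0)))

def e : MvPolynomial (Fin 2) ℤ ≃ₐ[ℤ] (ℤ[X])[X] :=
  (MvPolynomial.renameEquiv ℤ (Equiv.swap (0 : Fin 2) 1)).trans
    ((MvPolynomial.finSuccEquiv ℤ 1).trans (Polynomial.mapAlgEquiv ε))

lemma e_X0 : e (MvPolynomial.X 0) = C X := by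
  simp only [e, AlgEquiv.trans_apply, MvPolynomial.renameEquiv_apply,
    MvPolynomial.rename_X, Equiv.swap_apply_left]
  rw [show (1 : Fin 2) = Fin.succ 0 from rfl, MvPolynomial.finSuccEquiv_X_succ]
  simp [ε, Polynomial.mapAlgEquiv, MvPolynomial.finSuccEquiv_X_zero]

lemma e_X1 : e (MvPolynomial.X 1) = X := by
  simp only [e, AlgEquiv.trans_apply, MvPolynomial.renameEquiv_apply,
    MvPolynomial.rename_X, Equiv.swap_apply_right, MvPolynomial.finSuccEquiv_X_zero]
  simp [Polynomial.mapAlgEquiv]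

lemma e_C (a : ℤ) : e (MvPolynomial.C a) = C (C a) := by
  have h1 : MvPolynomial.C a = algebraMap ℤ (MvPolynomial (Fin 2) ℤ) a := rfl
  rw [h1, AlgEquiv.commutes]
  have : algebraMap ℤ ((ℤ[X])[X]) a = C (C (algebraMap ℤ ℤ a)) := rfl
  simpa using this

end Stmt16AuxE

section
open Stmt16AuxE Polynomial Finset

lemma e_gen1 (n : ℕ) : e (MvPolynomial.X 0 ^ n - 1) = Polynomial.C (Polynomial.X ^ n - 1) := by
  rw [map_sub, map_pow, e_X0, map_one, ← map_pow, ← map_one (Polynomial.C (R := ℤ[X])), ← map_sub]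

lemma e_gen2 (n : ℕ) :
    e (((∑ i ∈ range (n / 2 + 1),
            MvPolynomial.C ((-1 : ℤ) ^ i * ((n * Nat.choose (n - i) i / (n - i) : ℕ) : ℤ)) *
              MvPolynomial.X 0 ^ i * MvPolynomial.X 1 ^ (n - 2 * i)) - 2) *
        (∑ i ∈ range ((n - 1) / 2 + 1),
            MvPolynomial.C ((-1 : ℤ) ^ i * (Nat.choose (n - 1 - i) i : ℤ)) *
              MvPolynomial.X 0 ^ i * MvPolynomial.X 1 ^ (n - 1 - 2 * i)))
      = ((∑ i ∈ range (n / 2 + 1),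
            Polynomial.C (Polynomial.C ((-1 : ℤ) ^ i * ((n * Nat.choose (n - i) i / (n - i) : ℕ) : ℤ)) * Polynomial.X ^ i) *
              Polynomial.X ^ (n - 2 * i)) - 2) *
        (∑ i ∈ range ((n - 1) / 2 + 1),
            Polynomial.C (Polynomial.C ((-1 : ℤ) ^ i * (Nat.choose (n - 1 - i) i : ℤ)) * Polynomial.X ^ i) *
              Polynomial.X ^ (n - 1 - 2 * i)) := by
  rw [map_mul, map_sub, map_sum, map_sum]
  congr 1
  · congr 1
    · refine Finset.sum_congr rfl fun i _ => ?_
      rw [map_mul, map_mul, map_pow, map_pow, e_X0, e_X1, e_C, map_mul, ← map_pow, ← map_mul]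
    · exact map_ofNat _ 2
  · refine Finset.sum_congr rfl fun i _ => ?_
    rw [map_mul, map_mul, map_pow, map_pow, e_X0, e_X1, e_C, map_mul, ← map_pow, ← map_mul]
end


open MvPolynomial Finset

set_option maxHeartbeats 1000000 in
set_option synthInstance.maxHeartbeats 400000 in
/-- `ℤ[x,y]/I`, where `I = (xⁿ − 1, (W_n − 2)·V_n)` with
`W_n = Σ_{i=0}^{⌊n/2⌋} (-1)ⁱ (n/(n-i)) C(n-i,i) xⁱ y^{n-2i}` (whose coefficients
`(n/(n-i))·C(n-i,i)` are integers, written via exact natural division) and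
`V_n = Σ_{i=0}^{⌊(n-1)/2⌋} (-1)ⁱ C(n-1-i,i) xⁱ y^{n-1-2i}`, is a free `ℤ`-module of
rank `n(2n−1)` with basis the images of `{xˡyᵐ : 0 ≤ l ≤ n−1, 0 ≤ m ≤ 2n−2}`.
This is the projective class ring `r_p(H_n(1,q))`. -/
theorem stmt_16 (n : ℕ) (hn : 3 ≤ n)
    (I : Ideal (MvPolynomial (Fin 2) ℤ))
    (hI : I = Ideal.span
      { X 0 ^ n - 1,
        ((∑ i ∈ range (n / 2 + 1),
            C ((-1 : ℤ) ^ i * ((n * Nat.choose (n - i) i / (n - i) : ℕ) : ℤ)) *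
              X 0 ^ i * X 1 ^ (n - 2 * i)) - 2) *
        (∑ i ∈ range ((n - 1) / 2 + 1),
            C ((-1 : ℤ) ^ i * (Nat.choose (n - 1 - i) i : ℤ)) *
              X 0 ^ i * X 1 ^ (n - 1 - 2 * i)) }) :
    ∃ B : Module.Basis (Fin n × Fin (2 * n - 1)) ℤ (MvPolynomial (Fin 2) ℤ ⧸ I),
      ∀ (l : Fin n) (m : Fin (2 * n - 1)),
        B (l, m) = Ideal.Quotient.mk I (X 0 ^ (l : ℕ) * X 1 ^ (m : ℕ)) := by
  classical
  obtain ⟨hg, hgd⟩ := And.intro (Stmt16Aux.monic_gP hn) (Stmt16Aux.natDegree_gP hn)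
  obtain ⟨hf, hfd⟩ := Stmt16Aux.monic_fP hn
  set g : Polynomial ℤ := Stmt16Aux.gP n with hgdef
  set f : Polynomial (Polynomial ℤ) := Stmt16Aux.fP n with hfdef
  set 𝔤 : Ideal (Polynomial ℤ) := Ideal.span {g} with h𝔤
  set J1 : Ideal (Polynomial (Polynomial ℤ)) :=
    𝔤.map (Polynomial.C : Polynomial ℤ →+* Polynomial (Polynomial ℤ)) with hJ1
  set J : Ideal (Polynomial (Polynomial ℤ)) := Ideal.span {Polynomial.C g, f} with hJdef
  have hJ : J = I.map (Stmt16AuxE.e : MvPolynomial (Fin 2) ℤ →+* Polynomial (Polynomial ℤ)) := by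
    rw [hI, Ideal.map_span, hJdef]
    congr 1
    rw [Set.image_insert_eq, Set.image_singleton]
    congr 1
    · exact (e_gen1 n).symm
    · congr 1
      exact (e_gen2 n).symm
  have hsup : J = J1 ⊔ Ideal.span {f} := by
    rw [hJdef, Ideal.span_insert, hJ1, Ideal.map_span, Set.image_singleton]
  have hmapf : (Ideal.span {f}).map (Ideal.Quotient.mk J1) =
      Ideal.span {Ideal.Quotient.mk J1 f} := by
    rw [Ideal.map_span, Set.image_singleton]
  set fbar : Polynomial (Polynomial ℤ ⧸ 𝔤) := f.map (Ideal.Quotient.mk 𝔤) with hfbardef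
  have hfbar : fbar.Monic := hf.map _
  haveI : Nontrivial (Polynomial ℤ ⧸ 𝔤) := by
    refine Ideal.Quotient.nontrivial_iff.mpr ?_
    intro htop
    have : IsUnit g := by
      rw [Ideal.span_singleton_eq_top] at htop; exact htop
    have hdeg : g.natDegree = 0 := Polynomial.natDegree_eq_zero_of_isUnit this
    omega
  have hfbard : fbar.natDegree = 2 * n - 1 := by
    rw [hfbardef, hf.natDegree_map, hfd]
  -- the ring equivalence chain
  let Φ1 : (MvPolynomial (Fin 2) ℤ ⧸ I) ≃+* (Polynomial (Polynomial ℤ) ⧸ J) :=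
    Ideal.quotientEquiv I J Stmt16AuxE.e.toRingEquiv hJ
  let Φ2 := Ideal.quotEquivOfEq hsup
  let Φ3 := (DoubleQuot.quotQuotEquivQuotSup J1 (Ideal.span {f})).symm
  haveI : (Ideal.span {Ideal.Quotient.mk J1 f}).IsTwoSided :=
    ⟨fun b ha => mul_comm b _ ▸ Ideal.mul_mem_left _ b ha⟩
  haveI : (Ideal.span {fbar}).IsTwoSided :=
    ⟨fun b ha => mul_comm b _ ▸ Ideal.mul_mem_left _ b ha⟩
  let Φ4 := Ideal.quotEquivOfEq hmapf
  let Φ5 := (AdjoinRoot.Polynomial.quotQuotEquivComm 𝔤 f).symm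
  let Φ : (MvPolynomial (Fin 2) ℤ ⧸ I) ≃+* AdjoinRoot fbar :=
    Φ1.trans (Φ2.trans (Φ3.trans (Φ4.trans Φ5)))
  -- bases
  let pbS : PowerBasis ℤ (AdjoinRoot g) := AdjoinRoot.powerBasis' hg
  have hdimS : pbS.dim = n := hgd
  let bS : Module.Basis (Fin n) ℤ (Polynomial ℤ ⧸ 𝔤) := pbS.basis.reindex (finCongr hdimS)
  let pbA : PowerBasis (Polynomial ℤ ⧸ 𝔤) (AdjoinRoot fbar) := AdjoinRoot.powerBasis' hfbar
  have hdimA : pbA.dim = 2 * n - 1 := hfbard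
  let bA : Module.Basis (Fin (2 * n - 1)) (Polynomial ℤ ⧸ 𝔤) (AdjoinRoot fbar) :=
    pbA.basis.reindex (finCongr hdimA)
  let bT : Module.Basis (Fin n × Fin (2 * n - 1)) ℤ (AdjoinRoot fbar) := bS.smulTower bA
  let B : Module.Basis (Fin n × Fin (2 * n - 1)) ℤ (MvPolynomial (Fin 2) ℤ ⧸ I) :=
    bT.map Φ.symm.toAddEquiv.toIntLinearEquiv
  refine ⟨B, fun l m => ?_⟩
  have hB : B (l, m) = Φ.symm (bT (l, m)) := by
    rw [Module.Basis.map_apply]; rfl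
  -- compute both sides
  have hbT : bT (l, m) = bS l • bA m := Module.Basis.smulTower_apply bS bA (l, m)
  have hbS : bS l = Ideal.Quotient.mk 𝔤 (Polynomial.X ^ (l : ℕ)) := by
    show pbS.basis.reindex (finCongr hdimS) l = _
    rw [Module.Basis.reindex_apply, PowerBasis.basis_eq_pow, map_pow]
    have hgen : pbS.gen = AdjoinRoot.root g := AdjoinRoot.powerBasis'_gen hg
    rw [hgen]
    rfl
  have hbA : bA m = Ideal.Quotient.mk (Ideal.span {fbar}) (Polynomial.X ^ (m : ℕ)) := by
    show pbA.basis.reindex (finCongr hdimA) m = _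
    rw [Module.Basis.reindex_apply, PowerBasis.basis_eq_pow, map_pow]
    have hgen : pbA.gen = AdjoinRoot.root fbar := AdjoinRoot.powerBasis'_gen hfbar
    rw [hgen]
    rfl
  -- compute Φ applied to the monomial
  have hmono : Φ (Ideal.Quotient.mk I (MvPolynomial.X 0 ^ (l : ℕ) * MvPolynomial.X 1 ^ (m : ℕ)))
      = Ideal.Quotient.mk (Ideal.span {fbar})
          ((Polynomial.C (Polynomial.X ^ (l : ℕ)) * Polynomial.X ^ (m : ℕ)).map
            (Ideal.Quotient.mk 𝔤)) := by
    have hcomp : Φ (Ideal.Quotient.mk I (MvPolynomial.X 0 ^ (l : ℕ) * MvPolynomial.X 1 ^ (m : ℕ)))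
        = Φ5 (Φ4 (Φ3 (Φ2 (Φ1 (Ideal.Quotient.mk I
            (MvPolynomial.X 0 ^ (l : ℕ) * MvPolynomial.X 1 ^ (m : ℕ))))))) := rfl
    rw [hcomp]
    have h1 : Φ1 (Ideal.Quotient.mk I (MvPolynomial.X 0 ^ (l : ℕ) * MvPolynomial.X 1 ^ (m : ℕ)))
        = Ideal.Quotient.mk J (Polynomial.C (Polynomial.X ^ (l : ℕ)) * Polynomial.X ^ (m : ℕ)) := by
      refine (Ideal.quotientEquiv_mk (I := I) (J := J) (f := Stmt16AuxE.e.toRingEquiv) (hIJ := hJ) _).trans ?_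
      congr 1
      show Stmt16AuxE.e _ = _
      rw [map_mul, map_pow, map_pow, Stmt16AuxE.e_X0, Stmt16AuxE.e_X1, ← map_pow]
    rw [h1]
    have h2 : Φ2 (Ideal.Quotient.mk J (Polynomial.C (Polynomial.X ^ (l : ℕ)) * Polynomial.X ^ (m : ℕ)))
        = Ideal.Quotient.mk (J1 ⊔ Ideal.span {f}) (Polynomial.C (Polynomial.X ^ (l : ℕ)) * Polynomial.X ^ (m : ℕ)) :=
      Ideal.quotEquivOfEq_mk _ _
    rw [h2, show Φ3 (Ideal.Quotient.mk (J1 ⊔ Ideal.span {f}) (Polynomial.C (Polynomial.X ^ (l : ℕ)) * Polynomial.X ^ (m : ℕ)))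
        = DoubleQuot.quotQuotMk J1 (Ideal.span {f}) (Polynomial.C (Polynomial.X ^ (l : ℕ)) * Polynomial.X ^ (m : ℕ)) from
      DoubleQuot.quotQuotEquivQuotSup_symm_quotQuotMk _ _ _]
    have h4 : Φ4 (DoubleQuot.quotQuotMk J1 (Ideal.span {f}) (Polynomial.C (Polynomial.X ^ (l : ℕ)) * Polynomial.X ^ (m : ℕ)))
        = Ideal.Quotient.mk (Ideal.span {Ideal.Quotient.mk J1 f})
            (Ideal.Quotient.mk J1 (Polynomial.C (Polynomial.X ^ (l : ℕ)) * Polynomial.X ^ (m : ℕ))) :=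
      Ideal.quotEquivOfEq_mk _ _
    rw [h4]
    exact AdjoinRoot.Polynomial.quotQuotEquivComm_symm_mk_mk 𝔤 f _
  have key : bT (l, m)
      = Φ (Ideal.Quotient.mk I (MvPolynomial.X 0 ^ (l : ℕ) * MvPolynomial.X 1 ^ (m : ℕ))) := by
    rw [hmono, hbT, hbS, hbA]
    rw [Polynomial.map_mul, Polynomial.map_C, Polynomial.map_pow, Polynomial.map_X,
      ← Polynomial.smul_eq_C_mul]
    rfl
  rw [hB, key, RingEquiv.symm_apply_apply]
end
end

section
/- For every n ≥ 2 and every i with 0 ≤ i ≤ ⌊n/2⌋, the rational number (n/(n-i))·C(n-i, i) is a positive integer, where C denotes the binomial coefficient. -/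
/-- For `n ≥ 2` and `0 ≤ i ≤ ⌊n/2⌋`, the rational number `(n/(n-i))·C(n-i,i)`
is a positive integer. -/
theorem stmt_17 (n i : ℕ) (hn : 2 ≤ n) (hi : i ≤ n / 2) :
    ∃ k : ℕ, 0 < k ∧ (n : ℚ) / ((n : ℚ) - i) * (Nat.choose (n - i) i : ℚ) = k := by
  have hin : i < n := by omega
  have hne : (n : ℚ) - i ≠ 0 := by
    have : (n : ℚ) - i = ((n - i : ℕ) : ℚ) := by
      push_cast [Nat.cast_sub hin.le]; ring
    rw [this]
    exact_mod_cast Nat.sub_ne_zero_of_lt hin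
  rcases Nat.eq_zero_or_pos i with h0 | hipos
  · refine ⟨1, one_pos, ?_⟩
    subst h0
    simp only [Nat.sub_zero, Nat.choose_zero_right, Nat.cast_one, Nat.cast_zero, sub_zero,
      mul_one, Nat.cast_one]
    field_simp
  · refine ⟨Nat.choose (n - i) i + Nat.choose (n - i - 1) (i - 1), ?_, ?_⟩
    · have : 0 < Nat.choose (n - i) i := Nat.choose_pos (by omega)
      omega
    · have hkey : n * Nat.choose (n - i) i =
        (n - i) * (Nat.choose (n - i) i + Nat.choose (n - i - 1) (i - 1)) := by
      -- i * C(n-i, i) = (n-i) * C(n-i-1, i-1)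
        obtain ⟨j, rfl⟩ : ∃ j, i = j + 1 := ⟨i - 1, by omega⟩
        obtain ⟨l, hl⟩ : ∃ l, n - (j + 1) = l + 1 := ⟨n - (j+1) - 1, by omega⟩
        rw [hl]
        have hs := Nat.add_one_mul_choose_eq l j
        have : (j + 1) * Nat.choose (l + 1) (j + 1) = (l + 1) * Nat.choose l j := by
          simpa [Nat.succ_eq_add_one, mul_comm] using hs.symm
        have hn' : n = (l + 1) + (j + 1) := by omega
        simp only [Nat.add_sub_cancel]
        nlinarith [this]
      have hcast : ((n : ℚ) - i) = ((n - i : ℕ) : ℚ) := by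
        push_cast [Nat.cast_sub hin.le]; ring
      rw [hcast, div_mul_eq_mul_div, div_eq_iff (by exact_mod_cast Nat.sub_ne_zero_of_lt hin)]
      exact_mod_cast hkey.trans (Nat.mul_comm _ _)
end
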